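/- arXiv:1204.4547 — 3 statements merged into one kernel-verified Lean document; each statement's English description precedes it below -/
import Mathlib

section
/- Let n ≥ 2 and let the right-hand sides be specialised to the associahedron, i.e. w_δ = |R_δ|(|R_δ|+1)/2 for every proper diagonal δ and z_{[n]} = n(n+1)/2. Then the Minkowski coefficient of the full set satisfies y_{[n]} = (−1)^{|U|}. -/
open Finset

attribute [local instance] Classical.propDecidable

namespace AssocPaper

/-- `x` and `y` are consecutive elements of the finite set `S`. -/
def ConsecIn (S : Finset ℕ) (x y : ℕ) : Prop :=
  x ∈ S ∧ y ∈ S ∧ x < y ∧ ∀ z ∈ S, ¬ (x < z ∧ z < y)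

/-- `D̄ = D ∪ {0, n+1}`. -/
def Dbar (n : ℕ) (D : Finset ℕ) : Finset ℕ := insert 0 (insert (n + 1) D)

/-- The boundary edges of the `c`-labeled `(n+2)`-gon, given by endpoints `x < y`:
pairs of consecutive elements of `D̄`; if `U ≠ ∅` also `{0, min U}`, `{max U, n+1}` and
pairs of consecutive elements of `U`; if `U = ∅` also `{0, n+1}`. -/
def IsBoundary (n : ℕ) (D U : Finset ℕ) (x y : ℕ) : Prop :=
  ConsecIn (Dbar n D) x y
    ∨ (U.Nonempty ∧
        ((x = 0 ∧ y ∈ U ∧ ∀ u ∈ U, y ≤ u)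
          ∨ (y = n + 1 ∧ x ∈ U ∧ ∀ u ∈ U, u ≤ x)
          ∨ ConsecIn U x y))
    ∨ (U = ∅ ∧ x = 0 ∧ y = n + 1)

/-- `{x, y}` (with `x < y ≤ n+1`) is a proper diagonal: a diagonal of the
`(n+2)`-gon which is not a boundary edge. -/
def IsProper (n : ℕ) (D U : Finset ℕ) (x y : ℕ) : Prop :=
  x < y ∧ y ≤ n + 1 ∧ ¬ IsBoundary n D U x y

/-- The set `R_δ` for a proper diagonal `δ = {x,y}` with `x < y`. -/
noncomputable def Rdiag (n : ℕ) (D U : Finset ℕ) (x y : ℕ) : Finset ℕ :=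
  if x ∈ U then
    (if y ∈ U then (D ∪ U.filter fun u => u ≤ x) ∪ U.filter fun u => y ≤ u
     else D.filter (fun d => d < y) ∪ U.filter fun u => u ≤ x)
  else
    (if y ∈ U then D.filter (fun d => x < d) ∪ U.filter fun u => y ≤ u
     else D.filter fun d => x < d ∧ d < y)

/-- The extension of `R` to non-proper and degenerate diagonals `δ = {x,y}`, `x ≤ y`:
`R_δ = [n]` if `U = ∅` and `δ = {0,n+1}`; for other non-proper or degenerate `δ`,
`R_δ = ∅` if `x,y ∈ D̄` and `R_δ = [n]` otherwise. -/
noncomputable def Rext (n : ℕ) (D U : Finset ℕ) (x y : ℕ) : Finset ℕ :=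
  if IsProper n D U x y then Rdiag n D U x y
  else if U = ∅ ∧ x = 0 ∧ y = n + 1 then Finset.Icc 1 n
  else if x ∈ U ∨ y ∈ U then Finset.Icc 1 n
  else ∅

/-- The extension of the right-hand sides `z_{R_δ}` to non-proper and degenerate
diagonals, given the values `w` on proper diagonals and the value `zn = z_{[n]}`. -/
noncomputable def zext (n : ℕ) (D U : Finset ℕ) (w : ℕ × ℕ → ℝ) (zn : ℝ) (x y : ℕ) : ℝ :=
  if IsProper n D U x y then w (x, y)
  else if U = ∅ ∧ x = 0 ∧ y = n + 1 then zn
  else if x ∈ U ∨ y ∈ U then zn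
  else 0

/-- `a(I)`: the largest element of `D ∪ {0}` smaller than `min I`. -/
noncomputable def aI (D I : Finset ℕ) : ℕ :=
  ((insert 0 D).filter fun e => ∀ i ∈ I, e < i).sup id

/-- `b(I)`: the smallest element of `D ∪ {n+1}` larger than `max I`. -/
noncomputable def bI (n : ℕ) (D I : Finset ℕ) : ℕ :=
  sInf {e : ℕ | e ∈ insert (n + 1) D ∧ ∀ i ∈ I, i < e}

/-- The minimum element `γ` of `I` (junk value for `I = ∅`). -/
noncomputable def minEl (I : Finset ℕ) : ℕ := sInf {i : ℕ | i ∈ I}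

/-- The maximum element `Γ` of `I` (junk value `0` for `I = ∅`). -/
noncomputable def maxEl (I : Finset ℕ) : ℕ := I.sup id

/-- A nonempty `I ⊆ [n]` is nested if every `d ∈ D` with `a(I) < d < b(I)` lies in `I`. -/
def IsNested (n : ℕ) (D I : Finset ℕ) : Prop :=
  I.Nonempty ∧ I ⊆ Finset.Icc 1 n ∧
    ∀ d ∈ D, aI D I < d → d < bI n D I → d ∈ I

/-- The nested components of `I`: the inclusion-maximal nested subsets of `I`. -/
noncomputable def nestedComponents (n : ℕ) (D I : Finset ℕ) : Finset (Finset ℕ) :=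
  I.powerset.filter fun J =>
    IsNested n D J ∧ ∀ K ∈ I.powerset, IsNested n D K → J ⊆ K → J = K

/-- `v(I)`: the number of nested components of `I`. -/
noncomputable def vI (n : ℕ) (D I : Finset ℕ) : ℕ := (nestedComponents n D I).card

/-- `x` is the last element of one of the up intervals of `J`
(an element of `J ∩ U` whose successor in `U`, if any, is not in `J`). -/
def IsRunEnd (U J : Finset ℕ) (x : ℕ) : Prop :=
  x ∈ J ∧ x ∈ U ∧ ∀ y, ConsecIn U x y → y ∉ J

/-- `y` is the first element of one of the up intervals of `J`
(an element of `J ∩ U` whose predecessor in `U`, if any, is not in `J`). -/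
def IsRunStart (U J : Finset ℕ) (y : ℕ) : Prop :=
  y ∈ J ∧ y ∈ U ∧ ∀ x, ConsecIn U x y → x ∉ J

/-- `{x,y}` is one of the diagonals `δ_1(J), …, δ_{w+1}(J)` associated to a nested
set `J` with `a = a(J)`, `b = b(J)` and up intervals `[α_1,β_1]_U, …, [α_w,β_w]_U`,
namely `{a,α_1}, {β_1,α_2}, …, {β_w,b}` (and `{a,b}` when `w = 0`). -/
def AssocDiag (n : ℕ) (D U J : Finset ℕ) (x y : ℕ) : Prop :=
  x < y ∧ (x = aI D J ∨ IsRunEnd U J x) ∧ (y = bI n D J ∨ IsRunStart U J y) ∧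
    ∀ u ∈ J ∩ U, ¬ (x < u ∧ u < y)

/-- `W(J)`: the proper diagonals among the diagonals associated to the nested set `J`. -/
noncomputable def WJ (n : ℕ) (D U J : Finset ℕ) : Finset (ℕ × ℕ) :=
  (Finset.range (n + 2) ×ˢ Finset.range (n + 2)).filter fun p =>
    AssocDiag n D U J p.1 p.2 ∧ IsProper n D U p.1 p.2

/-- The tight value `z^c_I = ∑_i ( ∑_{j ∈ W(J_i)} w_{δ_j(J_i)} − (|W(J_i)|−1)·z_{[n]} )`,
the sum running over the nested components `J_i` of `I` (so `z^c_∅ = 0`). -/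
noncomputable def zc (n : ℕ) (D U : Finset ℕ) (w : ℕ × ℕ → ℝ) (zn : ℝ) (I : Finset ℕ) : ℝ :=
  ∑ J ∈ nestedComponents n D I,
    ((∑ p ∈ WJ n D U J, w p) - (((WJ n D U J).card : ℝ) - 1) * zn)

/-- The Minkowski coefficient `y_I = ∑_{J ⊆ I} (−1)^{|I∖J|} z^c_J`. -/
noncomputable def yI (n : ℕ) (D U : Finset ℕ) (w : ℕ × ℕ → ℝ) (zn : ℝ) (I : Finset ℕ) : ℝ :=
  ∑ J ∈ I.powerset, (-1 : ℝ) ^ (I \ J).card * zc n D U w zn J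

/-- The associahedron right-hand sides `w_δ = |R_δ|·(|R_δ|+1)/2`. -/
noncomputable def wAs (n : ℕ) (D U : Finset ℕ) (p : ℕ × ℕ) : ℝ :=
  (((Rdiag n D U p.1 p.2).card : ℝ) * (((Rdiag n D U p.1 p.2).card : ℝ) + 1)) / 2

/-- The associahedron value `z_{[n]} = n(n+1)/2`. -/
noncomputable def znAs (n : ℕ) : ℝ := ((n : ℝ) * ((n : ℝ) + 1)) / 2


/-! ### Auxiliary development for statement3 -/

noncomputable def zeta (n : ℕ) (D U : Finset ℕ) (p : ℕ × ℕ) : ℝ :=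
  if IsProper n D U p.1 p.2 then wAs n D U p else znAs n

noncomputable def AJf (n : ℕ) (D U : Finset ℕ) (K : Finset ℕ) : Finset (ℕ × ℕ) :=
  (Finset.range (n + 2) ×ˢ Finset.range (n + 2)).filter fun p => AssocDiag n D U K p.1 p.2

noncomputable def Fp (n : ℕ) (D U : Finset ℕ) (K : Finset ℕ) : ℝ :=
  znAs n + ∑ p ∈ AJf n D U K, (zeta n D U p - znAs n)

noncomputable def Bfull (n : ℕ) (D U K : Finset ℕ) : Finset ℕ :=
  insert (aI D K) (insert (bI n D K)
    ((U.filter fun u => aI D K < u ∧ u < bI n D K) \ K))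

section Aux

variable {n : ℕ} {D U : Finset ℕ}

/-- membership bounds for `U`. -/
lemma U_bounds (hDU : D ∪ U = Finset.Icc 1 n) (hdisj : Disjoint D U)
    (h1D : 1 ∈ D) (hnD : n ∈ D) {u : ℕ} (hu : u ∈ U) : 2 ≤ u ∧ u < n := by
  have h1 : u ∈ Finset.Icc 1 n := hDU ▸ Finset.mem_union_right D hu
  rw [Finset.mem_Icc] at h1
  have h2 : u ≠ 1 := fun h => Finset.disjoint_left.1 hdisj h1D (h ▸ hu)
  have h3 : u ≠ n := fun h => Finset.disjoint_left.1 hdisj hnD (h ▸ hu)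
  omega

lemma D_subset (hDU : D ∪ U = Finset.Icc 1 n) : D ⊆ Finset.Icc 1 n :=
  hDU ▸ Finset.subset_union_left

lemma U_subset (hDU : D ∪ U = Finset.Icc 1 n) : U ⊆ Finset.Icc 1 n :=
  hDU ▸ Finset.subset_union_right

/-! #### `aI` and `bI` API -/

lemma aI_spec {K : Finset ℕ} (hK : K ⊆ Finset.Icc 1 n) :
    aI D K ∈ insert 0 D ∧ ∀ i ∈ K, aI D K < i := by
  have hne : ((insert 0 D).filter fun e => ∀ i ∈ K, e < i).Nonempty := by
    refine ⟨0, Finset.mem_filter.2 ⟨Finset.mem_insert_self _ _, fun i hi => ?_⟩⟩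
    have := (Finset.mem_Icc.1 (hK hi)).1; omega
  obtain ⟨e, he, hsup⟩ := Finset.exists_mem_eq_sup _ hne id
  rw [Finset.mem_filter] at he
  rw [aI, hsup]
  exact he

lemma le_aI {K : Finset ℕ} {e : ℕ} (he : e ∈ insert 0 D) (h : ∀ i ∈ K, e < i) :
    e ≤ aI D K :=
  Finset.le_sup (f := id) (Finset.mem_filter.2 ⟨he, h⟩)

lemma aI_antitone {K K' : Finset ℕ} (h : K ⊆ K') : aI D K' ≤ aI D K := by
  apply Finset.sup_mono
  intro e he
  rw [Finset.mem_filter] at he ⊢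
  exact ⟨he.1, fun i hi => he.2 i (h hi)⟩

lemma bI_spec {K : Finset ℕ} (hK : K ⊆ Finset.Icc 1 n) :
    bI n D K ∈ insert (n + 1) D ∧ ∀ i ∈ K, i < bI n D K := by
  have hmem : (n + 1) ∈ {e : ℕ | e ∈ insert (n + 1) D ∧ ∀ i ∈ K, i < e} := by
    refine ⟨Finset.mem_insert_self _ _, fun i hi => ?_⟩
    have := (Finset.mem_Icc.1 (hK hi)).2; omega
  exact Nat.sInf_mem ⟨n + 1, hmem⟩

lemma bI_le {K : Finset ℕ} {e : ℕ} (he : e ∈ insert (n + 1) D) (h : ∀ i ∈ K, i < e) :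
    bI n D K ≤ e :=
  Nat.sInf_le ⟨he, h⟩

lemma bI_monotone {K K' : Finset ℕ} (hK' : K' ⊆ Finset.Icc 1 n) (h : K ⊆ K') :
    bI n D K ≤ bI n D K' := by
  obtain ⟨h1, h2⟩ := bI_spec (D := D) hK'
  exact bI_le h1 fun i hi => h2 i (h hi)

lemma aI_not_mem {K : Finset ℕ} (hK : K ⊆ Finset.Icc 1 n) : aI D K ∉ K :=
  fun h => lt_irrefl _ ((aI_spec hK).2 _ h)

lemma bI_not_mem {K : Finset ℕ} (hK : K ⊆ Finset.Icc 1 n) : bI n D K ∉ K :=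
  fun h => lt_irrefl _ ((bI_spec hK).2 _ h)

/-! #### parity sums -/

lemma sum_pow_card_powerset (s : Finset ℕ) :
    ∑ M ∈ s.powerset, (-1 : ℝ) ^ M.card = if s = ∅ then 1 else 0 := by
  have h := Finset.sum_powerset_neg_one_pow_card (x := s)
  have h2 : ((∑ m ∈ s.powerset, (-1 : ℤ) ^ m.card : ℤ) : ℝ)
      = ∑ m ∈ s.powerset, (-1 : ℝ) ^ m.card := by push_cast; rfl
  rw [← h2, h]
  split_ifs <;> norm_num

lemma parity_sum (C A B : Finset ℕ) (hAC : A ⊆ C) (hAB : Disjoint A B) :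
    ∑ J ∈ C.powerset.filter (fun J => A ⊆ J ∧ Disjoint J B), (-1 : ℝ) ^ J.card
      = if C ⊆ A ∪ B then (-1) ^ A.card else 0 := by
  have key : ∑ J ∈ C.powerset.filter (fun J => A ⊆ J ∧ Disjoint J B), (-1 : ℝ) ^ J.card
      = ∑ M ∈ (C \ (A ∪ B)).powerset, (-1 : ℝ) ^ (A ∪ M).card := by
    refine Finset.sum_nbij' (fun J => J \ A) (fun M => A ∪ M) ?_ ?_ ?_ ?_ ?_
    · intro J hJ
      rw [Finset.mem_filter, Finset.mem_powerset] at hJ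
      rw [Finset.mem_powerset]
      intro x hx
      rw [Finset.mem_sdiff] at hx ⊢
      rw [Finset.mem_union]
      exact ⟨hJ.1 hx.1, by push_neg; exact ⟨hx.2, Finset.disjoint_left.1 hJ.2.2 hx.1⟩⟩
    · intro M hM
      rw [Finset.mem_powerset] at hM
      rw [Finset.mem_filter, Finset.mem_powerset]
      refine ⟨Finset.union_subset hAC fun x hx => ?_, Finset.subset_union_left,
        Finset.disjoint_union_left.2 ⟨hAB, ?_⟩⟩
      · exact (Finset.mem_sdiff.1 (hM hx)).1
      · exact Finset.disjoint_left.2 fun x hx hxB =>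
          (Finset.mem_sdiff.1 (hM hx)).2 (Finset.mem_union_right A hxB)
    · intro J hJ
      rw [Finset.mem_filter] at hJ
      exact Finset.union_sdiff_of_subset hJ.2.1
    · intro M hM
      rw [Finset.mem_powerset] at hM
      refine Finset.union_sdiff_cancel_left (Finset.disjoint_left.2 fun x hxA hxM => ?_)
      exact absurd (Finset.mem_union_left B hxA) (Finset.mem_sdiff.1 (hM hxM)).2
    · intro J hJ
      rw [Finset.mem_filter] at hJ
      rw [Finset.union_sdiff_of_subset hJ.2.1]
  rw [key]
  have : ∀ M ∈ (C \ (A ∪ B)).powerset, (-1 : ℝ) ^ (A ∪ M).card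
      = (-1) ^ A.card * (-1) ^ M.card := by
    intro M hM
    rw [Finset.mem_powerset] at hM
    have hd : Disjoint A M := Finset.disjoint_left.2 fun x hxA hxM =>
      absurd (Finset.mem_union_left B hxA) (Finset.mem_sdiff.1 (hM hxM)).2
    rw [Finset.card_union_of_disjoint hd, pow_add]
  rw [Finset.sum_congr rfl this, ← Finset.mul_sum, sum_pow_card_powerset]
  by_cases hC : C ⊆ A ∪ B
  · rw [if_pos (Finset.sdiff_eq_empty_iff_subset.2 hC), if_pos hC, mul_one]
  · rw [if_neg (fun h => hC (Finset.sdiff_eq_empty_iff_subset.1 h)), if_neg hC, mul_zero]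

lemma neg_one_pow_sdiff {J : Finset ℕ} (h : J ⊆ Finset.Icc 1 n) :
    ((-1 : ℝ)) ^ ((Finset.Icc 1 n \ J).card) = (-1) ^ n * (-1) ^ J.card := by
  have h2 : (Finset.Icc 1 n \ J).card + J.card = n := by
    rw [Finset.card_sdiff_add_card_eq_card h, Nat.card_Icc]; omega
  have h3 : (-1 : ℝ) ^ ((Finset.Icc 1 n \ J).card) * ((-1) ^ J.card * (-1) ^ J.card)
      = (-1) ^ n * (-1) ^ J.card := by
    rw [← mul_assoc, ← pow_add, h2]
  have h4 : (-1 : ℝ) ^ J.card * (-1) ^ J.card = 1 := by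
    rw [← pow_add]
    exact Even.neg_one_pow ⟨J.card, rfl⟩
  rw [h4, mul_one] at h3
  exact h3

end Aux
section Chunk2

variable {n : ℕ} {D U : Finset ℕ}

lemma WJ_eq (K : Finset ℕ) :
    WJ n D U K = (AJf n D U K).filter fun p => IsProper n D U p.1 p.2 := by
  rw [WJ, AJf, Finset.filter_filter]

lemma Fp_eq (K : Finset ℕ) :
    Fp n D U K = (∑ p ∈ WJ n D U K, wAs n D U p)
      - (((WJ n D U K).card : ℝ) - 1) * znAs n := by
  rw [Fp]
  have h1 : ∑ p ∈ AJf n D U K, (zeta n D U p - znAs n)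
      = ∑ p ∈ (AJf n D U K).filter (fun p => IsProper n D U p.1 p.2),
            (zeta n D U p - znAs n)
        + ∑ p ∈ (AJf n D U K).filter (fun p => ¬ IsProper n D U p.1 p.2),
            (zeta n D U p - znAs n) :=
    (Finset.sum_filter_add_sum_filter_not _ _ _).symm
  have h2 : ∑ p ∈ (AJf n D U K).filter (fun p => ¬ IsProper n D U p.1 p.2),
      (zeta n D U p - znAs n) = 0 := by
    apply Finset.sum_eq_zero; intro p hp
    rw [Finset.mem_filter] at hp
    rw [zeta, if_neg hp.2, sub_self]
  have h3 : ∀ p ∈ (AJf n D U K).filter (fun p => IsProper n D U p.1 p.2),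
      zeta n D U p - znAs n = wAs n D U p - znAs n := by
    intro p hp; rw [Finset.mem_filter] at hp
    rw [zeta, if_pos hp.2]
  rw [h1, h2, add_zero, Finset.sum_congr rfl h3, ← WJ_eq, Finset.sum_sub_distrib,
    Finset.sum_const, nsmul_eq_mul]
  ring

lemma zc_eq (J : Finset ℕ) :
    zc n D U (wAs n D U) (znAs n) J = ∑ K ∈ nestedComponents n D J, Fp n D U K := by
  rw [zc]
  exact Finset.sum_congr rfl fun K _ => by rw [Fp_eq]

lemma nested_insert_aI (hDU : D ∪ U = Finset.Icc 1 n) {K : Finset ℕ}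
    (hK : IsNested n D K) (haD : aI D K ∈ D) :
    IsNested n D (insert (aI D K) K) := by
  obtain ⟨hKne, hKsub, hKn⟩ := hK
  obtain ⟨i0, hi0⟩ := hKne
  have haK := (aI_spec (D := D) hKsub).2
  have hbK := (bI_spec (D := D) hKsub).2
  refine ⟨⟨aI D K, Finset.mem_insert_self _ _⟩,
    Finset.insert_subset (D_subset hDU haD) hKsub, ?_⟩
  have hbL : bI n D (insert (aI D K) K) = bI n D K := by
    refine le_antisymm (bI_le (bI_spec (D := D) hKsub).1 ?_)
      (bI_monotone (Finset.insert_subset (D_subset hDU haD) hKsub)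
        (Finset.subset_insert _ _))
    intro i hi
    rcases Finset.mem_insert.1 hi with h | h
    · subst h; exact lt_trans (haK i0 hi0) (hbK i0 hi0)
    · exact hbK i h
  intro d hd h1 h2
  rw [hbL] at h2
  rcases lt_trichotomy d (aI D K) with hlt | heq | hgt
  · exfalso
    have : d ≤ aI D (insert (aI D K) K) := by
      refine le_aI (Finset.mem_insert_of_mem hd) ?_
      intro i hi
      rcases Finset.mem_insert.1 hi with h | h
      · omega
      · exact lt_trans hlt (haK i h)
    omega
  · rw [heq]; exact Finset.mem_insert_self _ _
  · exact Finset.mem_insert_of_mem (hKn d hd hgt h2)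

lemma nested_insert_bI (hDU : D ∪ U = Finset.Icc 1 n) {K : Finset ℕ}
    (hK : IsNested n D K) (hbD : bI n D K ∈ D) :
    IsNested n D (insert (bI n D K) K) := by
  obtain ⟨hKne, hKsub, hKn⟩ := hK
  obtain ⟨i0, hi0⟩ := hKne
  have haK := (aI_spec (D := D) hKsub).2
  have hbK := (bI_spec (D := D) hKsub).2
  refine ⟨⟨i0, Finset.mem_insert_of_mem hi0⟩,
    Finset.insert_subset (D_subset hDU hbD) hKsub, ?_⟩
  have haL : aI D (insert (bI n D K) K) = aI D K := by
    refine le_antisymm (aI_antitone (Finset.subset_insert _ _))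
      (le_aI (aI_spec (D := D) hKsub).1 ?_)
    intro i hi
    rcases Finset.mem_insert.1 hi with h | h
    · subst h; exact lt_trans (haK i0 hi0) (hbK i0 hi0)
    · exact haK i h
  intro d hd h1 h2
  rw [haL] at h1
  rcases lt_trichotomy d (bI n D K) with hlt | heq | hgt
  · exact Finset.mem_insert_of_mem (hKn d hd h1 hlt)
  · rw [heq]; exact Finset.mem_insert_self _ _
  · exfalso
    have : bI n D (insert (bI n D K) K) ≤ d := by
      refine bI_le (Finset.mem_insert_of_mem hd) ?_
      intro i hi
      rcases Finset.mem_insert.1 hi with h | h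
      · omega
      · exact lt_of_lt_of_le (hbK i h) (le_of_lt hgt)
    omega

lemma nested_insert_U (hDU : D ∪ U = Finset.Icc 1 n) {K : Finset ℕ} {u : ℕ}
    (hK : IsNested n D K) (hu : u ∈ U) (h1 : aI D K < u) (h2 : u < bI n D K) :
    IsNested n D (insert u K) := by
  obtain ⟨hKne, hKsub, hKn⟩ := hK
  have haK := (aI_spec (D := D) hKsub).2
  have hbK := (bI_spec (D := D) hKsub).2
  refine ⟨⟨u, Finset.mem_insert_self _ _⟩,
    Finset.insert_subset (U_subset hDU hu) hKsub, ?_⟩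
  intro d hd hdl hdr
  have hda : aI D K < d := by
    by_contra h
    push_neg at h
    have : d ≤ aI D (insert u K) := by
      refine le_aI (Finset.mem_insert_of_mem hd) ?_
      intro i hi
      rcases Finset.mem_insert.1 hi with hh | hh
      · omega
      · exact lt_of_le_of_lt h (haK i hh)
    omega
  have hdb : d < bI n D K := by
    by_contra h
    push_neg at h
    have : bI n D (insert u K) ≤ d := by
      refine bI_le (Finset.mem_insert_of_mem hd) ?_
      intro i hi
      rcases Finset.mem_insert.1 hi with hh | hh
      · omega
      · exact lt_of_lt_of_le (hbK i hh) h
    omega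
  exact Finset.mem_insert_of_mem (hKn d hd hda hdb)

lemma mem_nestedComponents_iff (hDU : D ∪ U = Finset.Icc 1 n)
    {J K : Finset ℕ} (hJ : J ⊆ Finset.Icc 1 n) :
    K ∈ nestedComponents n D J ↔
      K ⊆ J ∧ IsNested n D K ∧ aI D K ∉ J ∧ bI n D K ∉ J ∧
        ∀ u ∈ J, u ∈ U → aI D K < u → u < bI n D K → u ∈ K := by
  rw [nestedComponents, Finset.mem_filter, Finset.mem_powerset]
  constructor
  · rintro ⟨hKJ, hnest, hmax⟩
    have hKsub := hnest.2.1
    refine ⟨hKJ, hnest, ?_, ?_, ?_⟩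
    · intro haJ
      have haD : aI D K ∈ D := by
        rcases Finset.mem_insert.1 (aI_spec (D := D) hKsub).1 with h | h
        · exfalso; have := (Finset.mem_Icc.1 (hJ haJ)).1; omega
        · exact h
      have hL := nested_insert_aI hDU hnest haD
      have := hmax _ (Finset.mem_powerset.2 (Finset.insert_subset haJ hKJ)) hL
        (Finset.subset_insert _ _)
      exact aI_not_mem hKsub (this ▸ Finset.mem_insert_self _ _)
    · intro hbJ
      have hbD : bI n D K ∈ D := by
        rcases Finset.mem_insert.1 (bI_spec (D := D) hKsub).1 with h | h
        · exfalso; have := (Finset.mem_Icc.1 (hJ hbJ)).2; omega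
        · exact h
      have hL := nested_insert_bI hDU hnest hbD
      have := hmax _ (Finset.mem_powerset.2 (Finset.insert_subset hbJ hKJ)) hL
        (Finset.subset_insert _ _)
      exact bI_not_mem hKsub (this ▸ Finset.mem_insert_self _ _)
    · intro u huJ huU h1 h2
      by_contra huK
      have hL := nested_insert_U hDU hnest huU h1 h2
      have := hmax _ (Finset.mem_powerset.2 (Finset.insert_subset huJ hKJ)) hL
        (Finset.subset_insert _ _)
      exact huK (this ▸ Finset.mem_insert_self _ _)
  · rintro ⟨hKJ, hnest, haJ, hbJ, hU⟩
    refine ⟨hKJ, hnest, ?_⟩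
    intro K' hK' hnest' hsub
    rw [Finset.mem_powerset] at hK'
    refine Finset.Subset.antisymm hsub ?_
    intro m hm
    obtain ⟨i0, hi0⟩ := hnest.1
    have hab : aI D K < bI n D K :=
      lt_trans ((aI_spec (D := D) hnest.2.1).2 i0 hi0)
        ((bI_spec (D := D) hnest.2.1).2 i0 hi0)
    have haK' : ∀ x ∈ K', aI D K < x := by
      intro x hx
      by_contra h
      push_neg at h
      have haD : aI D K ∈ D := by
        rcases Finset.mem_insert.1 (aI_spec (D := D) hnest.2.1).1 with hh | hh
        · exfalso
          have := (Finset.mem_Icc.1 (hnest'.2.1 hx)).1; omega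
        · exact hh
      have : aI D K ∈ K' := by
        refine hnest'.2.2 _ haD ?_ ?_
        · exact lt_of_lt_of_le ((aI_spec (D := D) hnest'.2.1).2 x hx) h
        · exact lt_of_lt_of_le hab (bI_monotone hnest'.2.1 hsub)
      exact haJ (hK' this)
    have hbK' : ∀ x ∈ K', x < bI n D K := by
      intro x hx
      by_contra h
      push_neg at h
      have hbD : bI n D K ∈ D := by
        rcases Finset.mem_insert.1 (bI_spec (D := D) hnest.2.1).1 with hh | hh
        · exfalso
          have := (Finset.mem_Icc.1 (hnest'.2.1 hx)).2; omega
        · exact hh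
      have : bI n D K ∈ K' := by
        refine hnest'.2.2 _ hbD ?_ ?_
        · exact lt_of_le_of_lt (aI_antitone hsub) hab
        · exact lt_of_le_of_lt h ((bI_spec (D := D) hnest'.2.1).2 x hx)
      exact hbJ (hK' this)
    have hmIcc : m ∈ D ∪ U := by rw [hDU]; exact hnest'.2.1 hm
    rcases Finset.mem_union.1 hmIcc with hmD | hmU
    · exact hnest.2.2 m hmD (haK' m hm) (hbK' m hm)
    · exact hU m (hK' hm) hmU (haK' m hm) (hbK' m hm)

end Chunk2
section Chunk3

variable {n : ℕ} {D U : Finset ℕ}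

lemma disjoint_Bfull_iff {J K : Finset ℕ} :
    Disjoint J (Bfull n D U K) ↔
      aI D K ∉ J ∧ bI n D K ∉ J ∧
        ∀ u ∈ J, u ∈ U → aI D K < u → u < bI n D K → u ∈ K := by
  rw [Bfull, Finset.disjoint_insert_right, Finset.disjoint_insert_right]
  constructor
  · rintro ⟨ha, hb, hd⟩
    refine ⟨ha, hb, fun u huJ huU h1 h2 => ?_⟩
    by_contra huK
    exact (Finset.disjoint_left.1 hd) huJ
      (Finset.mem_sdiff.2 ⟨Finset.mem_filter.2 ⟨huU, h1, h2⟩, huK⟩)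
  · rintro ⟨ha, hb, hU⟩
    refine ⟨ha, hb, Finset.disjoint_left.2 fun u huJ humem => ?_⟩
    rw [Finset.mem_sdiff, Finset.mem_filter] at humem
    exact humem.2 (hU u huJ humem.1.1 humem.1.2.1 humem.1.2.2)

lemma disjoint_K_Bfull {K : Finset ℕ} (hK : K ⊆ Finset.Icc 1 n) :
    Disjoint K (Bfull n D U K) := by
  rw [Bfull, Finset.disjoint_insert_right, Finset.disjoint_insert_right]
  exact ⟨aI_not_mem hK, bI_not_mem hK,
    Finset.disjoint_left.2 fun x hx hmem => (Finset.mem_sdiff.1 hmem).2 hx⟩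

lemma yI_eq_G (hDU : D ∪ U = Finset.Icc 1 n) :
    yI n D U (wAs n D U) (znAs n) (Finset.Icc 1 n)
      = ∑ K ∈ (Finset.Icc 1 n).powerset,
          (if IsNested n D K ∧ Finset.Icc 1 n ⊆ K ∪ Bfull n D U K
           then (-1 : ℝ) ^ n * (-1) ^ K.card * Fp n D U K else 0) := by
  rw [yI]
  have step1 : ∀ J ∈ (Finset.Icc 1 n).powerset,
      (-1 : ℝ) ^ ((Finset.Icc 1 n \ J).card) * zc n D U (wAs n D U) (znAs n) J
        = ∑ K ∈ (Finset.Icc 1 n).powerset,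
            (if K ∈ nestedComponents n D J
             then (-1 : ℝ) ^ n * (-1) ^ J.card * Fp n D U K else 0) := by
    intro J hJ
    rw [Finset.mem_powerset] at hJ
    have hsub : nestedComponents n D J ⊆ (Finset.Icc 1 n).powerset := by
      intro K hK
      rw [nestedComponents, Finset.mem_filter, Finset.mem_powerset] at hK
      exact Finset.mem_powerset.2 (hK.1.trans hJ)
    rw [neg_one_pow_sdiff hJ, zc_eq, Finset.mul_sum,
      Finset.sum_ite_mem, Finset.inter_eq_right.2 hsub]
  rw [Finset.sum_congr rfl step1, Finset.sum_comm]
  refine Finset.sum_congr rfl ?_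
  intro K hK
  rw [Finset.mem_powerset] at hK
  by_cases hnest : IsNested n D K
  · have hiff : ∀ J ∈ (Finset.Icc 1 n).powerset,
        (if K ∈ nestedComponents n D J
         then (-1 : ℝ) ^ n * (-1) ^ J.card * Fp n D U K else 0)
          = (if K ⊆ J ∧ Disjoint J (Bfull n D U K)
             then ((-1 : ℝ) ^ n * Fp n D U K) * (-1) ^ J.card else 0) := by
      intro J hJ
      rw [Finset.mem_powerset] at hJ
      have : K ∈ nestedComponents n D J ↔ (K ⊆ J ∧ Disjoint J (Bfull n D U K)) := by
        rw [mem_nestedComponents_iff hDU hJ, disjoint_Bfull_iff]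
        constructor
        · rintro ⟨h1, _, h3⟩; exact ⟨h1, h3⟩
        · rintro ⟨h1, h3⟩; exact ⟨h1, hnest, h3⟩
      rw [if_congr this rfl rfl]
      split_ifs
      · ring
      · rfl
    rw [Finset.sum_congr rfl hiff, ← Finset.sum_filter, ← Finset.mul_sum,
      parity_sum _ _ _ hK (disjoint_K_Bfull hK)]
    split_ifs with h1 h2 h2
    · ring
    · exact absurd ⟨hnest, h1⟩ h2
    · exact absurd h2.2 h1
    · ring
  · have : ∀ J ∈ (Finset.Icc 1 n).powerset,
        (if K ∈ nestedComponents n D J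
         then (-1 : ℝ) ^ n * (-1) ^ J.card * Fp n D U K else 0) = 0 := by
      intro J hJ
      rw [if_neg]
      intro hmem
      rw [nestedComponents, Finset.mem_filter] at hmem
      exact hnest hmem.2.1
    rw [Finset.sum_congr rfl this, Finset.sum_const_zero, if_neg (fun h => hnest h.1)]

end Chunk3
section Chunk4

variable {n : ℕ} {D U : Finset ℕ}

lemma KES_subset (hDU : D ∪ U = Finset.Icc 1 n) {E S : Finset ℕ} (hS : S ⊆ U) :
    (D \ E) ∪ S ⊆ Finset.Icc 1 n :=
  Finset.union_subset ((Finset.sdiff_subset).trans (D_subset hDU))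
    (hS.trans (U_subset hDU))

lemma mem_KES_lb (hDU : D ∪ U = Finset.Icc 1 n) (hdisj : Disjoint D U)
    (h1D : 1 ∈ D) (hnD : n ∈ D) {E S : Finset ℕ} (hE : E ⊆ ({1, n} : Finset ℕ))
    (hS : S ⊆ U) {i : ℕ} (hi : i ∈ (D \ E) ∪ S) : 1 ≤ i ∧ i ≤ n := by
  have := Finset.mem_Icc.1 (KES_subset hDU hS hi); omega

lemma aI_KES (hDU : D ∪ U = Finset.Icc 1 n) (hdisj : Disjoint D U)
    (h1D : 1 ∈ D) (hnD : n ∈ D) {E S : Finset ℕ} (hE : E ⊆ ({1, n} : Finset ℕ))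
    (hS : S ⊆ U) (hne : ((D \ E) ∪ S).Nonempty) :
    aI D ((D \ E) ∪ S) = if 1 ∈ E then 1 else 0 := by
  by_cases h1 : 1 ∈ E
  · rw [if_pos h1]
    refine le_antisymm ?_ ?_
    · rw [aI]
      refine Finset.sup_le ?_
      intro e he
      rw [Finset.mem_filter] at he
      simp only [id_eq]
      by_contra hc
      push_neg at hc
      have heD : e ∈ D := by
        rcases Finset.mem_insert.1 he.1 with h | h
        · omega
        · exact h
      have heE : e ∈ E := by
        by_contra heE
        have : e ∈ (D \ E) ∪ S := Finset.mem_union_left _ (Finset.mem_sdiff.2 ⟨heD, heE⟩)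
        exact lt_irrefl e (he.2 e this)
      have hen : e = n := by
        rcases Finset.mem_insert.1 (hE heE) with h | h
        · omega
        · exact Finset.mem_singleton.1 h
      obtain ⟨i0, hi0⟩ := hne
      have := he.2 i0 hi0
      have := (mem_KES_lb hDU hdisj h1D hnD hE hS hi0).2
      omega
    · refine le_aI (Finset.mem_insert_of_mem h1D) ?_
      intro i hi
      have hlb := mem_KES_lb hDU hdisj h1D hnD hE hS hi
      rcases Finset.mem_union.1 hi with h | h
      · rw [Finset.mem_sdiff] at h
        have : i ≠ 1 := fun hh => h.2 (hh ▸ h1)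
        omega
      · have := (U_bounds hDU hdisj h1D hnD (hS h)).1; omega
  · rw [if_neg h1]
    refine Nat.le_antisymm ?_ (Nat.zero_le _)
    rw [aI]
    refine Finset.sup_le ?_
    intro e he
    rw [Finset.mem_filter] at he
    simp only [id_eq]
    have : e < 1 := he.2 1 (Finset.mem_union_left _ (Finset.mem_sdiff.2 ⟨h1D, h1⟩))
    omega

lemma bI_KES (hDU : D ∪ U = Finset.Icc 1 n) (hdisj : Disjoint D U)
    (h1D : 1 ∈ D) (hnD : n ∈ D) {E S : Finset ℕ} (hE : E ⊆ ({1, n} : Finset ℕ))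
    (hS : S ⊆ U) (hne : ((D \ E) ∪ S).Nonempty) :
    bI n D ((D \ E) ∪ S) = if n ∈ E then n else n + 1 := by
  have hKsub := KES_subset (E := E) hDU hS
  obtain ⟨hbmem, hblt⟩ := bI_spec (D := D) hKsub
  by_cases hn' : n ∈ E
  · rw [if_pos hn']
    refine le_antisymm (bI_le (Finset.mem_insert_of_mem hnD) ?_) ?_
    · intro i hi
      have hlb := mem_KES_lb hDU hdisj h1D hnD hE hS hi
      rcases Finset.mem_union.1 hi with h | h
      · rw [Finset.mem_sdiff] at h
        have : i ≠ n := fun hh => h.2 (hh ▸ hn')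
        omega
      · have := (U_bounds hDU hdisj h1D hnD (hS h)).2; omega
    · by_contra hc
      push_neg at hc
      have hbD : bI n D ((D \ E) ∪ S) ∈ D := by
        rcases Finset.mem_insert.1 hbmem with h | h
        · omega
        · exact h
      have hbE : bI n D ((D \ E) ∪ S) ∈ E := by
        by_contra hbE
        have : bI n D ((D \ E) ∪ S) ∈ (D \ E) ∪ S :=
          Finset.mem_union_left _ (Finset.mem_sdiff.2 ⟨hbD, hbE⟩)
        exact lt_irrefl _ (hblt _ this)
      have : bI n D ((D \ E) ∪ S) = 1 := by
        rcases Finset.mem_insert.1 (hE hbE) with h | h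
        · exact h
        · rw [Finset.mem_singleton] at h; omega
      obtain ⟨i0, hi0⟩ := hne
      have := hblt i0 hi0
      have := (mem_KES_lb hDU hdisj h1D hnD hE hS hi0).1
      omega
  · rw [if_neg hn']
    have hnK : n ∈ (D \ E) ∪ S := Finset.mem_union_left _ (Finset.mem_sdiff.2 ⟨hnD, hn'⟩)
    have h1 : n < bI n D ((D \ E) ∪ S) := hblt n hnK
    have h2 : bI n D ((D \ E) ∪ S) ≤ n + 1 := by
      refine bI_le (Finset.mem_insert_self _ _) ?_
      intro i hi
      have := (mem_KES_lb hDU hdisj h1D hnD hE hS hi).2; omega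
    omega

lemma KES_nested (hDU : D ∪ U = Finset.Icc 1 n) (hdisj : Disjoint D U)
    (h1D : 1 ∈ D) (hnD : n ∈ D) {E S : Finset ℕ} (hE : E ⊆ ({1, n} : Finset ℕ))
    (hS : S ⊆ U) (hne : ((D \ E) ∪ S).Nonempty) :
    IsNested n D ((D \ E) ∪ S) := by
  refine ⟨hne, KES_subset hDU hS, ?_⟩
  intro d hd h1 h2
  rw [aI_KES hDU hdisj h1D hnD hE hS hne] at h1
  rw [bI_KES hDU hdisj h1D hnD hE hS hne] at h2
  by_contra hdK
  have hdE : d ∈ E := by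
    by_contra hdE
    exact hdK (Finset.mem_union_left _ (Finset.mem_sdiff.2 ⟨hd, hdE⟩))
  rcases Finset.mem_insert.1 (hE hdE) with h | h
  · subst h
    rw [if_pos hdE] at h1
    omega
  · rw [Finset.mem_singleton] at h
    subst h
    rw [if_pos hdE] at h2
    omega

lemma KES_cover (hDU : D ∪ U = Finset.Icc 1 n) (hdisj : Disjoint D U)
    (h1D : 1 ∈ D) (hnD : n ∈ D) (hn : 2 ≤ n) {E S : Finset ℕ}
    (hE : E ⊆ ({1, n} : Finset ℕ)) (hS : S ⊆ U) (hne : ((D \ E) ∪ S).Nonempty) :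
    Finset.Icc 1 n ⊆ ((D \ E) ∪ S) ∪ Bfull n D U ((D \ E) ∪ S) := by
  have haI := aI_KES hDU hdisj h1D hnD hE hS hne
  have hbI := bI_KES hDU hdisj h1D hnD hE hS hne
  intro i hi
  rw [Finset.mem_Icc] at hi
  by_cases hiK : i ∈ (D \ E) ∪ S
  · exact Finset.mem_union_left _ hiK
  · refine Finset.mem_union_right _ ?_
    rw [Bfull]
    have hiDU : i ∈ D ∪ U := by rw [hDU]; exact Finset.mem_Icc.2 hi
    rcases Finset.mem_union.1 hiDU with hiD | hiU
    · have hiE : i ∈ E := by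
        by_contra h
        exact hiK (Finset.mem_union_left _ (Finset.mem_sdiff.2 ⟨hiD, h⟩))
      rcases Finset.mem_insert.1 (hE hiE) with h | h
      · subst h
        rw [haI, if_pos hiE]
        exact Finset.mem_insert_self _ _
      · rw [Finset.mem_singleton] at h
        subst h
        rw [hbI, if_pos hiE]
        exact Finset.mem_insert_of_mem (Finset.mem_insert_self _ _)
    · refine Finset.mem_insert_of_mem (Finset.mem_insert_of_mem ?_)
      rw [Finset.mem_sdiff, Finset.mem_filter]
      have hub := U_bounds hDU hdisj h1D hnD hiU
      refine ⟨⟨hiU, ?_, ?_⟩, hiK⟩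
      · rw [haI]; split_ifs <;> omega
      · rw [hbI]; split_ifs <;> omega

lemma AJf_nil (h1D : 1 ∈ D) (hnD : n ∈ D) (hn : 1 ≤ n) : AJf n D U ∅ = ∅ := by
  rw [AJf, Finset.filter_eq_empty_iff]
  intro p hp
  rintro ⟨hxy, hx, hy, -⟩
  have hx' : p.1 = aI D ∅ := by
    rcases hx with h | h
    · exact h
    · exact absurd h.1 (Finset.notMem_empty _)
  have hy' : p.2 = bI n D ∅ := by
    rcases hy with h | h
    · exact h
    · exact absurd h.1 (Finset.notMem_empty _)
  have ha : n ≤ aI D ∅ :=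
    le_aI (Finset.mem_insert_of_mem hnD) (by simp)
  have hb : bI n D ∅ ≤ 1 :=
    bI_le (Finset.mem_insert_of_mem h1D) (by simp)
  omega

lemma G_fiber (hDU : D ∪ U = Finset.Icc 1 n) (hdisj : Disjoint D U)
    (h1D : 1 ∈ D) (hnD : n ∈ D) (hn : 2 ≤ n) {E : Finset ℕ}
    (hE : E ⊆ ({1, n} : Finset ℕ)) :
    ((Finset.Icc 1 n).powerset.filter
        (fun K => IsNested n D K ∧ Finset.Icc 1 n ⊆ K ∪ Bfull n D U K)).filter
      (fun K => ({1, n} : Finset ℕ) \ K = E)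
      = (U.powerset.image fun S => (D \ E) ∪ S).erase ∅ := by
  ext K
  simp only [Finset.mem_filter, Finset.mem_powerset, Finset.mem_erase, Finset.mem_image]
  constructor
  · rintro ⟨⟨hKsub, hnest, hcov⟩, hfib⟩
    have hKne : K ≠ ∅ := Finset.nonempty_iff_ne_empty.1 hnest.1
    refine ⟨hKne, K ∩ U, Finset.inter_subset_right, ?_⟩
    -- show (D \ E) ∪ (K ∩ U) = K
    obtain ⟨i0, hi0⟩ := hnest.1
    have hi0n : 1 ≤ i0 ∧ i0 ≤ n := by
      have := Finset.mem_Icc.1 (hKsub hi0); omega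
    -- bounds on aI, bI
    have haIle : aI D K ≤ 1 := by
      have h1cov := hcov (Finset.mem_Icc.2 ⟨le_refl 1, by omega⟩)
      rcases Finset.mem_union.1 h1cov with h | h
      · have := (aI_spec (D := D) hnest.2.1).2 1 h; omega
      · rw [Bfull] at h
        rcases Finset.mem_insert.1 h with h | h
        · omega
        · rcases Finset.mem_insert.1 h with h | h
          · exfalso
            have := (bI_spec (D := D) hnest.2.1).2 i0 hi0
            omega
          · exfalso
            rw [Finset.mem_sdiff, Finset.mem_filter] at h
            exact Finset.disjoint_left.1 hdisj h1D h.1.1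
    have hbIge : n ≤ bI n D K := by
      have hncov := hcov (Finset.mem_Icc.2 ⟨by omega, le_refl n⟩)
      rcases Finset.mem_union.1 hncov with h | h
      · have := (bI_spec (D := D) hnest.2.1).2 n h; omega
      · rw [Bfull] at h
        rcases Finset.mem_insert.1 h with h | h
        · exfalso
          have := (aI_spec (D := D) hnest.2.1).2 i0 hi0
          omega
        · rcases Finset.mem_insert.1 h with h | h
          · omega
          · exfalso
            rw [Finset.mem_sdiff, Finset.mem_filter] at h
            exact Finset.disjoint_left.1 hdisj hnD h.1.1
    have hDEK : D \ E ⊆ K := by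
      intro d hd
      rw [Finset.mem_sdiff] at hd
      by_cases hd1 : d = 1
      · subst hd1
        by_contra h
        exact hd.2 (by rw [← hfib]; exact Finset.mem_sdiff.2 ⟨Finset.mem_insert_self _ _, h⟩)
      · by_cases hdn : d = n
        · subst hdn
          by_contra h
          exact hd.2 (by rw [← hfib]
                         exact Finset.mem_sdiff.2
                           ⟨Finset.mem_insert_of_mem (Finset.mem_singleton_self _), h⟩)
        · have hdIcc := Finset.mem_Icc.1 (D_subset hDU hd.1)
          have := hcov (D_subset hDU hd.1)
          rcases Finset.mem_union.1 this with h | h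
          · exact h
          · exfalso
            rw [Bfull] at h
            rcases Finset.mem_insert.1 h with h | h
            · omega
            · rcases Finset.mem_insert.1 h with h | h
              · omega
              · rw [Finset.mem_sdiff, Finset.mem_filter] at h
                exact Finset.disjoint_left.1 hdisj hd.1 h.1.1
    refine Finset.Subset.antisymm ?_ ?_
    · exact Finset.union_subset hDEK Finset.inter_subset_left
    · intro x hx
      have hxDU : x ∈ D ∪ U := by rw [hDU]; exact hnest.2.1 hx
      rcases Finset.mem_union.1 hxDU with h | h
      · refine Finset.mem_union_left _ (Finset.mem_sdiff.2 ⟨h, fun hxE => ?_⟩)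
        rw [← hfib, Finset.mem_sdiff] at hxE
        exact hxE.2 hx
      · exact Finset.mem_union_right _ (Finset.mem_inter.2 ⟨hx, h⟩)
  · rintro ⟨hKne, S, hS, hK⟩
    subst hK
    have hne : ((D \ E) ∪ S).Nonempty := Finset.nonempty_iff_ne_empty.2 hKne
    refine ⟨⟨KES_subset hDU hS, KES_nested hDU hdisj h1D hnD hE hS hne,
      KES_cover hDU hdisj h1D hnD hn hE hS hne⟩, ?_⟩
    ext i
    rw [Finset.mem_sdiff]
    constructor
    · rintro ⟨hi1n, hiK⟩
      rcases Finset.mem_insert.1 hi1n with h | h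
      · subst h
        by_contra h1E
        exact hiK (Finset.mem_union_left _ (Finset.mem_sdiff.2 ⟨h1D, h1E⟩))
      · rw [Finset.mem_singleton] at h
        subst h
        by_contra hnE
        exact hiK (Finset.mem_union_left _ (Finset.mem_sdiff.2 ⟨hnD, hnE⟩))
    · intro hiE
      refine ⟨hE hiE, fun hiK => ?_⟩
      rcases Finset.mem_union.1 hiK with h | h
      · exact (Finset.mem_sdiff.1 h).2 hiE
      · rcases Finset.mem_insert.1 (hE hiE) with hh | hh
        · subst hh
          exact Finset.disjoint_left.1 hdisj h1D (hS h)
        · rw [Finset.mem_singleton] at hh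
          subst hh
          exact Finset.disjoint_left.1 hdisj hnD (hS h)

end Chunk4
section Chunk5

variable {n : ℕ} {D U : Finset ℕ}

lemma KES_inter_U (hdisj : Disjoint D U) {E S : Finset ℕ} (hS : S ⊆ U) :
    ((D \ E) ∪ S) ∩ U = S := by
  ext x
  simp only [Finset.mem_inter, Finset.mem_union, Finset.mem_sdiff]
  constructor
  · rintro ⟨h | h, hU⟩
    · exact absurd hU (Finset.disjoint_left.1 hdisj h.1)
    · exact h
  · intro h; exact ⟨Or.inr h, hS h⟩

lemma mem_AJf_KES (hDU : D ∪ U = Finset.Icc 1 n) (hdisj : Disjoint D U)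
    (h1D : 1 ∈ D) (hnD : n ∈ D) (hn : 2 ≤ n) {E S : Finset ℕ}
    (hE : E ⊆ ({1, n} : Finset ℕ)) (hS : S ⊆ U) (hne : ((D \ E) ∪ S).Nonempty)
    (p : ℕ × ℕ) :
    p ∈ AJf n D U ((D \ E) ∪ S) ↔
      ((p.1 < p.2 ∧ (p.1 = (if 1 ∈ E then 1 else 0) ∨ p.1 ∈ U) ∧
        (p.2 = (if n ∈ E then n else n + 1) ∨ p.2 ∈ U) ∧ ¬ ConsecIn U p.1 p.2)
       ∧ (∀ u ∈ U, (u = p.1 ∨ u = p.2) → u ∈ S)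
       ∧ ∀ u ∈ S, ¬ (p.1 < u ∧ u < p.2)) := by
  obtain ⟨x, y⟩ := p
  have hUu : ∀ u ∈ U, 2 ≤ u ∧ u < n := fun u hu => U_bounds hDU hdisj h1D hnD hu
  have haU : (if 1 ∈ E then 1 else 0) ∉ U := by
    intro h; have := (hUu _ h).1; split_ifs at this <;> omega
  have hbU : (if n ∈ E then n else n + 1) ∉ U := by
    intro h; have := (hUu _ h).2; split_ifs at this <;> omega
  have ha1 : (if 1 ∈ E then 1 else 0) ≤ 1 := by split_ifs <;> omega
  have hbn : n ≤ (if n ∈ E then n else n + 1) ∧ (if n ∈ E then n else n + 1) ≤ n + 1 := by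
    split_ifs <;> omega
  have hKU := KES_inter_U (E := E) hdisj hS
  have hmemU : ∀ z, z ∈ (D \ E) ∪ S → z ∈ U → z ∈ S := by
    intro z hz hzU
    have : z ∈ ((D \ E) ∪ S) ∩ U := Finset.mem_inter.2 ⟨hz, hzU⟩
    rwa [hKU] at this
  simp only [AJf, Finset.mem_filter, Finset.mem_product, Finset.mem_range, AssocDiag,
    aI_KES hDU hdisj h1D hnD hE hS hne, bI_KES hDU hdisj h1D hnD hE hS hne]
  constructor
  · rintro ⟨⟨hx2, hy2⟩, hxy, hxside, hyside, hnb⟩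
    refine ⟨⟨hxy, ?_, ?_, ?_⟩, ?_, ?_⟩
    · rcases hxside with h | h
      · exact Or.inl h
      · exact Or.inr h.2.1
    · rcases hyside with h | h
      · exact Or.inl h
      · exact Or.inr h.2.1
    · intro hc
      rcases hxside with h | h
      · exact haU (h ▸ hc.1)
      · have hyK := h.2.2 y hc
        rcases hyside with h' | h'
        · exact hbU (h' ▸ hc.2.1)
        · exact hyK h'.1
    · intro u huU hor
      rcases hor with h | h
      · subst h
        rcases hxside with h' | h'
        · exact absurd (h' ▸ huU) haU
        · exact hmemU u h'.1 huU
      · subst h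
        rcases hyside with h' | h'
        · exact absurd (h' ▸ huU) hbU
        · exact hmemU u h'.1 huU
    · intro u huS
      exact hnb u (Finset.mem_inter.2 ⟨Finset.mem_union_right _ huS, hS huS⟩)
  · rintro ⟨⟨hxy, hxa, hyb, hnc⟩, hreq, hnb⟩
    have hx2 : x < n + 2 := by
      rcases hxa with h | h
      · omega
      · have := (hUu x h).2; omega
    have hy2 : y < n + 2 := by
      rcases hyb with h | h
      · omega
      · have := (hUu y h).2; omega
    refine ⟨⟨hx2, hy2⟩, hxy, ?_, ?_, ?_⟩
    · rcases hxa with h | h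
      · exact Or.inl h
      · refine Or.inr ⟨Finset.mem_union_right _ (hreq x h (Or.inl rfl)), h, ?_⟩
        intro y' hc hy'K
        have hy'U : y' ∈ U := hc.2.1
        have hy'S : y' ∈ S := hmemU y' hy'K hy'U
        rcases lt_trichotomy y' y with hlt | heq | hgt
        · exact hnb y' hy'S ⟨hc.2.2.1, hlt⟩
        · exact hnc (heq ▸ hc)
        · rcases hyb with h' | h'
          · have := (hUu y' hy'U).2; omega
          · exact hc.2.2.2 y h' ⟨hxy, hgt⟩
    · rcases hyb with h | h
      · exact Or.inl h
      · refine Or.inr ⟨Finset.mem_union_right _ (hreq y h (Or.inr rfl)), h, ?_⟩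
        intro x' hc hx'K
        have hx'U : x' ∈ U := hc.1
        have hx'S : x' ∈ S := hmemU x' hx'K hx'U
        rcases lt_trichotomy x' x with hlt | heq | hgt
        · rcases hxa with h' | h'
          · have := (hUu x' hx'U).1; omega
          · exact hc.2.2.2 x h' ⟨hlt, hxy⟩
        · exact hnc (heq ▸ hc)
        · exact hnb x' hx'S ⟨hgt, hc.2.2.1⟩
    · intro u hu
      have huS : u ∈ S := by rwa [hKU] at hu
      exact hnb u huS

end Chunk5
section Chunk6

variable {n : ℕ} {D U : Finset ℕ}

lemma minEl_mem (hU : U.Nonempty) : minEl U ∈ U := by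
  obtain ⟨u, hu⟩ := hU
  exact Nat.sInf_mem (⟨u, hu⟩ : {i : ℕ | i ∈ U}.Nonempty)

lemma minEl_le {u : ℕ} (hu : u ∈ U) : minEl U ≤ u := Nat.sInf_le hu

lemma maxEl_mem (hU : U.Nonempty) : maxEl U ∈ U := by
  obtain ⟨e, he, hs⟩ := Finset.exists_mem_eq_sup U hU id
  rw [maxEl, hs]; exact he

lemma le_maxEl {u : ℕ} (hu : u ∈ U) : u ≤ maxEl U := Finset.le_sup (f := id) hu

/-- The local summand after the inner alternating sum over `S` has been carried out. -/
noncomputable def gfun (n : ℕ) (D U : Finset ℕ) (a b : ℕ) (p : ℕ × ℕ) : ℝ :=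
  if (p.1 < p.2 ∧ (p.1 = a ∨ p.1 ∈ U) ∧ (p.2 = b ∨ p.2 ∈ U) ∧ ¬ ConsecIn U p.1 p.2)
      ∧ ∀ u ∈ U, p.1 ≤ u ∧ u ≤ p.2
  then (-1) ^ ((U.filter fun u => u = p.1 ∨ u = p.2).card) * (zeta n D U p - znAs n)
  else 0

lemma zeta_one_n_boundary (h1D : 1 ∈ D) (hnD : n ∈ D) (hn : 2 ≤ n)
    (hD2 : D \ ({1, n} : Finset ℕ) = ∅) :
    zeta n D U (1, n) = znAs n := by
  rw [zeta, if_neg]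
  rintro ⟨-, -, hb⟩
  apply hb
  left
  show ConsecIn (Dbar n D) 1 n
  refine ⟨Finset.mem_insert_of_mem (Finset.mem_insert_of_mem h1D),
    Finset.mem_insert_of_mem (Finset.mem_insert_of_mem hnD), by omega, ?_⟩
  intro z hz
  rintro ⟨h1z, hzn⟩
  rw [Dbar, Finset.mem_insert, Finset.mem_insert] at hz
  rcases hz with h | h | h
  · omega
  · omega
  · have : z ∈ D \ ({1, n} : Finset ℕ) :=
      Finset.mem_sdiff.2 ⟨h, by rw [Finset.mem_insert, Finset.mem_singleton]; omega⟩
    rw [hD2] at this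
    exact Finset.notMem_empty _ this

lemma inner_S (hDU : D ∪ U = Finset.Icc 1 n) (hdisj : Disjoint D U)
    (h1D : 1 ∈ D) (hnD : n ∈ D) (hn : 2 ≤ n) {E : Finset ℕ}
    (hE : E ⊆ ({1, n} : Finset ℕ)) (p : ℕ × ℕ)
    (hp : p ∈ Finset.range (n + 2) ×ˢ Finset.range (n + 2)) :
    ∑ S ∈ U.powerset, (-1 : ℝ) ^ S.card *
        (if AssocDiag n D U ((D \ E) ∪ S) p.1 p.2
         then zeta n D U p - znAs n else 0)
      = gfun n D U (if 1 ∈ E then 1 else 0) (if n ∈ E then n else n + 1) p := by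
  have hstepA : ∀ S ∈ U.powerset, (-1 : ℝ) ^ S.card *
      (if AssocDiag n D U ((D \ E) ∪ S) p.1 p.2
       then zeta n D U p - znAs n else 0)
      = (-1 : ℝ) ^ S.card *
        (if ((p.1 < p.2 ∧ (p.1 = (if 1 ∈ E then 1 else 0) ∨ p.1 ∈ U) ∧
              (p.2 = (if n ∈ E then n else n + 1) ∨ p.2 ∈ U) ∧ ¬ ConsecIn U p.1 p.2)
            ∧ (∀ u ∈ U, (u = p.1 ∨ u = p.2) → u ∈ S)
            ∧ ∀ u ∈ S, ¬ (p.1 < u ∧ u < p.2))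
         then zeta n D U p - znAs n else 0) := by
    intro S hSmem
    rw [Finset.mem_powerset] at hSmem
    by_cases hne : ((D \ E) ∪ S).Nonempty
    · have hiff : AssocDiag n D U ((D \ E) ∪ S) p.1 p.2 ↔ p ∈ AJf n D U ((D \ E) ∪ S) := by
        rw [AJf, Finset.mem_filter]
        exact ⟨fun h => ⟨hp, h⟩, fun h => h.2⟩
      rw [if_congr (hiff.trans (mem_AJf_KES hDU hdisj h1D hnD hn hE hSmem hne p)) rfl rfl]
    · -- degenerate case : D \ E = ∅ and S = ∅
      have hDE : D \ E = ∅ := by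
        rw [Finset.not_nonempty_iff_eq_empty, Finset.union_eq_empty] at hne
        exact hne.1
      have hSe : S = ∅ := by
        rw [Finset.not_nonempty_iff_eq_empty, Finset.union_eq_empty] at hne
        exact hne.2
      have h1E : 1 ∈ E := by
        by_contra h
        have : (1 : ℕ) ∈ D \ E := Finset.mem_sdiff.2 ⟨h1D, h⟩
        rw [hDE] at this; exact Finset.notMem_empty _ this
      have hnE : n ∈ E := by
        by_contra h
        have : n ∈ D \ E := Finset.mem_sdiff.2 ⟨hnD, h⟩
        rw [hDE] at this; exact Finset.notMem_empty _ this
      have hD2 : D \ ({1, n} : Finset ℕ) = ∅ := by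
        rw [Finset.eq_empty_iff_forall_notMem]
        intro d hd
        rw [Finset.mem_sdiff] at hd
        have : d ∈ D \ E := by
          refine Finset.mem_sdiff.2 ⟨hd.1, fun hdE => hd.2 (hE hdE)⟩
        rw [hDE] at this; exact Finset.notMem_empty _ this
      have hnotassoc : ¬ AssocDiag n D U ((D \ E) ∪ S) p.1 p.2 := by
        intro h
        have hmem : p ∈ AJf n D U ((D \ E) ∪ S) := by
          rw [AJf, Finset.mem_filter]; exact ⟨hp, h⟩
        rw [hDE, hSe, Finset.empty_union, AJf_nil h1D hnD (by omega)] at hmem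
        exact Finset.notMem_empty _ hmem
      rw [if_neg hnotassoc]
      by_cases hrhs : ((p.1 < p.2 ∧ (p.1 = (if 1 ∈ E then 1 else 0) ∨ p.1 ∈ U) ∧
          (p.2 = (if n ∈ E then n else n + 1) ∨ p.2 ∈ U) ∧ ¬ ConsecIn U p.1 p.2)
          ∧ (∀ u ∈ U, (u = p.1 ∨ u = p.2) → u ∈ S)
          ∧ ∀ u ∈ S, ¬ (p.1 < u ∧ u < p.2))
      · rw [if_pos hrhs]
        obtain ⟨⟨hxy, hxa, hyb, -⟩, hreq, -⟩ := hrhs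
        have hx1 : p.1 = 1 := by
          rcases hxa with h | h
          · rw [if_pos h1E] at h; exact h
          · exfalso
            have := hreq p.1 h (Or.inl rfl)
            rw [hSe] at this; exact Finset.notMem_empty _ this
        have hyn : p.2 = n := by
          rcases hyb with h | h
          · rw [if_pos hnE] at h; exact h
          · exfalso
            have := hreq p.2 h (Or.inr rfl)
            rw [hSe] at this; exact Finset.notMem_empty _ this
        have hpeq : p = (1, n) := Prod.ext hx1 hyn
        rw [hpeq, zeta_one_n_boundary h1D hnD hn hD2, sub_self]
      · rw [if_neg hrhs]
  rw [Finset.sum_congr rfl hstepA]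
  by_cases hQ : p.1 < p.2 ∧ (p.1 = (if 1 ∈ E then 1 else 0) ∨ p.1 ∈ U) ∧
      (p.2 = (if n ∈ E then n else n + 1) ∨ p.2 ∈ U) ∧ ¬ ConsecIn U p.1 p.2
  · have hdisjRF : Disjoint (U.filter fun u => u = p.1 ∨ u = p.2)
        (U.filter fun u => p.1 < u ∧ u < p.2) := by
      refine Finset.disjoint_left.2 fun u hu1 hu2 => ?_
      rw [Finset.mem_filter] at hu1 hu2
      omega
    have hstepB : ∀ S ∈ U.powerset, (-1 : ℝ) ^ S.card *
        (if ((p.1 < p.2 ∧ (p.1 = (if 1 ∈ E then 1 else 0) ∨ p.1 ∈ U) ∧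
              (p.2 = (if n ∈ E then n else n + 1) ∨ p.2 ∈ U) ∧ ¬ ConsecIn U p.1 p.2)
            ∧ (∀ u ∈ U, (u = p.1 ∨ u = p.2) → u ∈ S)
            ∧ ∀ u ∈ S, ¬ (p.1 < u ∧ u < p.2))
         then zeta n D U p - znAs n else 0)
        = (if (U.filter fun u => u = p.1 ∨ u = p.2) ⊆ S
              ∧ Disjoint S (U.filter fun u => p.1 < u ∧ u < p.2)
           then (-1 : ℝ) ^ S.card * (zeta n D U p - znAs n) else 0) := by
      intro S hSmem
      rw [Finset.mem_powerset] at hSmem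
      have hiff : ((p.1 < p.2 ∧ (p.1 = (if 1 ∈ E then 1 else 0) ∨ p.1 ∈ U) ∧
            (p.2 = (if n ∈ E then n else n + 1) ∨ p.2 ∈ U) ∧ ¬ ConsecIn U p.1 p.2)
          ∧ (∀ u ∈ U, (u = p.1 ∨ u = p.2) → u ∈ S)
          ∧ ∀ u ∈ S, ¬ (p.1 < u ∧ u < p.2))
          ↔ ((U.filter fun u => u = p.1 ∨ u = p.2) ⊆ S
              ∧ Disjoint S (U.filter fun u => p.1 < u ∧ u < p.2)) := by
        constructor
        · rintro ⟨-, hreq, hnb⟩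
          constructor
          · intro u hu
            rw [Finset.mem_filter] at hu
            exact hreq u hu.1 hu.2
          · refine Finset.disjoint_left.2 fun u huS humem => ?_
            rw [Finset.mem_filter] at humem
            exact hnb u huS humem.2
        · rintro ⟨hreq, hdj⟩
          refine ⟨hQ, fun u hu hor => hreq (Finset.mem_filter.2 ⟨hu, hor⟩),
            fun u huS hbet => ?_⟩
          exact Finset.disjoint_left.1 hdj huS (Finset.mem_filter.2 ⟨hSmem huS, hbet⟩)
      rw [if_congr hiff rfl rfl, mul_ite, mul_zero]
    rw [Finset.sum_congr rfl hstepB, ← Finset.sum_filter, ← Finset.sum_mul,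
      parity_sum U _ _ (Finset.filter_subset _ _) hdisjRF]
    have hsubiff : (U ⊆ (U.filter fun u => u = p.1 ∨ u = p.2)
        ∪ U.filter fun u => p.1 < u ∧ u < p.2) ↔ ∀ u ∈ U, p.1 ≤ u ∧ u ≤ p.2 := by
      constructor
      · intro h u hu
        have := h hu
        rw [Finset.mem_union, Finset.mem_filter, Finset.mem_filter] at this
        rcases this with h' | h' <;> omega
      · intro h u hu
        rw [Finset.mem_union, Finset.mem_filter, Finset.mem_filter]
        have := h u hu
        by_cases h1 : u = p.1 ∨ u = p.2
        · exact Or.inl ⟨hu, h1⟩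
        · push_neg at h1
          exact Or.inr ⟨hu, by omega, by omega⟩
    rw [gfun]
    by_cases hcond : ∀ u ∈ U, p.1 ≤ u ∧ u ≤ p.2
    · rw [if_pos (hsubiff.2 hcond), if_pos ⟨hQ, hcond⟩]
    · rw [if_neg (fun h => hcond (hsubiff.1 h)), if_neg (fun h => hcond h.2), zero_mul]
  · have hz : ∀ S ∈ U.powerset, (-1 : ℝ) ^ S.card *
        (if ((p.1 < p.2 ∧ (p.1 = (if 1 ∈ E then 1 else 0) ∨ p.1 ∈ U) ∧
              (p.2 = (if n ∈ E then n else n + 1) ∨ p.2 ∈ U) ∧ ¬ ConsecIn U p.1 p.2)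
            ∧ (∀ u ∈ U, (u = p.1 ∨ u = p.2) → u ∈ S)
            ∧ ∀ u ∈ S, ¬ (p.1 < u ∧ u < p.2))
         then zeta n D U p - znAs n else 0) = 0 := by
      intro S hSmem
      rw [if_neg (fun h => hQ h.1), mul_zero]
    rw [Finset.sum_congr rfl hz, Finset.sum_const_zero, gfun, if_neg (fun h => hQ h.1)]

end Chunk6
section Chunk7

variable {n : ℕ} {D U : Finset ℕ}

/-- The value of the inner alternating sum over `S ⊆ U`. -/
noncomputable def IVAL (n : ℕ) (D U : Finset ℕ) (a b : ℕ) : ℝ :=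
  (if U = ∅ then znAs n else 0) + (zeta n D U (a, b) - znAs n) +
    (if U = ∅ then 0 else
      -(zeta n D U (a, maxEl U) - znAs n) - (zeta n D U (minEl U, b) - znAs n) +
        (if minEl U < maxEl U ∧ ¬ ConsecIn U (minEl U) (maxEl U)
         then zeta n D U (minEl U, maxEl U) - znAs n else 0))

lemma sum_gfun (hDU : D ∪ U = Finset.Icc 1 n) (hdisj : Disjoint D U)
    (h1D : 1 ∈ D) (hnD : n ∈ D) (hn : 2 ≤ n) {a b : ℕ}
    (ha1 : a ≤ 1) (hbn : n ≤ b ∧ b ≤ n + 1) :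
    ∑ p ∈ Finset.range (n + 2) ×ˢ Finset.range (n + 2), gfun n D U a b p
      = (zeta n D U (a, b) - znAs n) +
        (if U = ∅ then 0 else
          -(zeta n D U (a, maxEl U) - znAs n) - (zeta n D U (minEl U, b) - znAs n) +
            (if minEl U < maxEl U ∧ ¬ ConsecIn U (minEl U) (maxEl U)
             then zeta n D U (minEl U, maxEl U) - znAs n else 0)) := by
  have habR : (a, b) ∈ Finset.range (n + 2) ×ˢ Finset.range (n + 2) := by
    rw [Finset.mem_product, Finset.mem_range, Finset.mem_range]; omega
  by_cases hUe : U = ∅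
  · subst hUe
    rw [if_pos rfl, add_zero]
    have h0 : ∀ p ∈ Finset.range (n + 2) ×ˢ Finset.range (n + 2), p ≠ (a, b) →
        gfun n D (∅ : Finset ℕ) a b p = 0 := by
      intro p hp hne
      rw [gfun, if_neg]
      rintro ⟨⟨-, h2, h3, -⟩, -⟩
      rcases h2 with h2 | h2
      · rcases h3 with h3 | h3
        · exact hne (Prod.ext h2 h3)
        · exact Finset.notMem_empty _ h3
      · exact Finset.notMem_empty _ h2
    rw [Finset.sum_eq_single_of_mem (a, b) habR h0, gfun, if_pos]
    · rw [Finset.filter_empty, Finset.card_empty, pow_zero, one_mul]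
    · refine ⟨⟨by omega, Or.inl rfl, Or.inl rfl, ?_⟩,
        fun u hu => absurd hu (Finset.notMem_empty u)⟩
      rintro ⟨h, -⟩
      exact Finset.notMem_empty _ h
  · have hUne : U.Nonempty := Finset.nonempty_iff_ne_empty.2 hUe
    have hmU := minEl_mem hUne
    have hMU := maxEl_mem hUne
    have hm2 : 2 ≤ minEl U ∧ minEl U < n := U_bounds hDU hdisj h1D hnD hmU
    have hM2 : 2 ≤ maxEl U ∧ maxEl U < n := U_bounds hDU hdisj h1D hnD hMU
    have hmM : minEl U ≤ maxEl U := minEl_le hMU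
    have haU : a ∉ U := fun h => by have := (U_bounds hDU hdisj h1D hnD h).1; omega
    have hbU : b ∉ U := fun h => by have := (U_bounds hDU hdisj h1D hnD h).2; omega
    have hSV : (insert ((a, b)) (insert ((a, maxEl U)) (insert ((minEl U, b))
        ({(minEl U, maxEl U)} : Finset (ℕ × ℕ)))))
        ⊆ Finset.range (n + 2) ×ˢ Finset.range (n + 2) := by
      intro p hp
      simp only [Finset.mem_insert, Finset.mem_singleton] at hp
      rw [Finset.mem_product, Finset.mem_range, Finset.mem_range]
      rcases hp with h | h | h | h <;> (rw [h]; constructor <;> (try simp) <;> omega)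
    have hvan : ∀ p ∈ Finset.range (n + 2) ×ˢ Finset.range (n + 2),
        p ∉ insert ((a, b)) (insert ((a, maxEl U)) (insert ((minEl U, b))
          ({(minEl U, maxEl U)} : Finset (ℕ × ℕ)))) → gfun n D U a b p = 0 := by
      intro p hp hpn
      rw [gfun, if_neg]
      rintro ⟨⟨hxy, hxa, hyb, -⟩, hcond⟩
      have hx : p.1 = a ∨ p.1 = minEl U := by
        rcases hxa with h | h
        · exact Or.inl h
        · right
          have h1 := minEl_le h
          have h2 := (hcond _ hmU).1
          omega
      have hy : p.2 = b ∨ p.2 = maxEl U := by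
        rcases hyb with h | h
        · exact Or.inl h
        · right
          have h1 := le_maxEl h
          have h2 := (hcond _ hMU).2
          omega
      apply hpn
      simp only [Finset.mem_insert, Finset.mem_singleton, Prod.ext_iff]
      rcases hx with h | h <;> rcases hy with h' | h' <;> tauto
    rw [← Finset.sum_subset hSV hvan]
    have hd1 : ((a, b) : ℕ × ℕ) ∉ insert ((a, maxEl U)) (insert ((minEl U, b))
        ({(minEl U, maxEl U)} : Finset (ℕ × ℕ))) := by
      simp only [Finset.mem_insert, Finset.mem_singleton, Prod.ext_iff]
      push_neg
      omega
    have hd2 : ((a, maxEl U) : ℕ × ℕ) ∉ insert ((minEl U, b))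
        ({(minEl U, maxEl U)} : Finset (ℕ × ℕ)) := by
      simp only [Finset.mem_insert, Finset.mem_singleton, Prod.ext_iff]
      push_neg
      omega
    have hd3 : ((minEl U, b) : ℕ × ℕ) ∉ ({(minEl U, maxEl U)} : Finset (ℕ × ℕ)) := by
      simp only [Finset.mem_singleton, Prod.ext_iff]
      push_neg
      intro
      omega
    rw [Finset.sum_insert hd1, Finset.sum_insert hd2, Finset.sum_insert hd3,
      Finset.sum_singleton]
    have gab : gfun n D U a b (a, b) = zeta n D U (a, b) - znAs n := by
      rw [gfun, if_pos]
      · have : U.filter (fun u => u = (a, b).1 ∨ u = (a, b).2) = ∅ := by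
          refine Finset.filter_false_of_mem ?_
          intro u hu
          have := U_bounds hDU hdisj h1D hnD hu
          push_neg
          constructor <;> omega
        rw [this, Finset.card_empty, pow_zero, one_mul]
      · refine ⟨⟨by omega, Or.inl rfl, Or.inl rfl, ?_⟩, fun u hu => ?_⟩
        · rintro ⟨h, -⟩; exact haU h
        · have := U_bounds hDU hdisj h1D hnD hu
          constructor <;> (try simp) <;> omega
    have gaM : gfun n D U a b (a, maxEl U) = -(zeta n D U (a, maxEl U) - znAs n) := by
      rw [gfun, if_pos]
      · have : U.filter (fun u => u = (a, maxEl U).1 ∨ u = (a, maxEl U).2) = {maxEl U} := by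
          ext u
          simp only [Finset.mem_filter, Finset.mem_singleton]
          constructor
          · rintro ⟨hu, h | h⟩
            · exfalso; have := U_bounds hDU hdisj h1D hnD hu; (try simp at h); omega
            · exact h
          · intro h; subst h; exact ⟨hMU, Or.inr rfl⟩
        rw [this, Finset.card_singleton, pow_one, neg_one_mul]
      · refine ⟨⟨by (try simp); omega, Or.inl rfl, Or.inr hMU, ?_⟩, fun u hu => ?_⟩
        · rintro ⟨h, -⟩; exact haU h
        · have := U_bounds hDU hdisj h1D hnD hu
          have := le_maxEl hu
          constructor <;> (try simp) <;> omega
    have gmb : gfun n D U a b (minEl U, b) = -(zeta n D U (minEl U, b) - znAs n) := by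
      rw [gfun, if_pos]
      · have : U.filter (fun u => u = (minEl U, b).1 ∨ u = (minEl U, b).2) = {minEl U} := by
          ext u
          simp only [Finset.mem_filter, Finset.mem_singleton]
          constructor
          · rintro ⟨hu, h | h⟩
            · exact h
            · exfalso; have := U_bounds hDU hdisj h1D hnD hu; (try simp at h); omega
          · intro h; subst h; exact ⟨hmU, Or.inl rfl⟩
        rw [this, Finset.card_singleton, pow_one, neg_one_mul]
      · refine ⟨⟨by (try simp); omega, Or.inr hmU, Or.inl rfl, ?_⟩, fun u hu => ?_⟩
        · rintro ⟨-, h, -⟩; exact hbU h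
        · have := U_bounds hDU hdisj h1D hnD hu
          have := minEl_le hu
          constructor <;> (try simp) <;> omega
    have gmM : gfun n D U a b (minEl U, maxEl U)
        = (if minEl U < maxEl U ∧ ¬ ConsecIn U (minEl U) (maxEl U)
           then zeta n D U (minEl U, maxEl U) - znAs n else 0) := by
      by_cases hc : minEl U < maxEl U ∧ ¬ ConsecIn U (minEl U) (maxEl U)
      · rw [if_pos hc, gfun, if_pos]
        · have : U.filter (fun u => u = (minEl U, maxEl U).1 ∨ u = (minEl U, maxEl U).2)
              = {minEl U, maxEl U} := by
            ext u
            simp only [Finset.mem_filter, Finset.mem_insert, Finset.mem_singleton]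
            constructor
            · rintro ⟨hu, h⟩; exact h
            · rintro (h | h) <;> subst h
              · exact ⟨hmU, Or.inl rfl⟩
              · exact ⟨hMU, Or.inr rfl⟩
          rw [this, Finset.card_insert_of_notMem (by (try simp); omega), Finset.card_singleton,
            neg_one_sq, one_mul]
        · refine ⟨⟨hc.1, Or.inr hmU, Or.inr hMU, hc.2⟩, fun u hu => ?_⟩
          have := minEl_le hu
          have := le_maxEl hu
          constructor <;> (try simp) <;> omega
      · rw [if_neg hc, gfun, if_neg]
        rintro ⟨⟨hxy, -, -, hnc⟩, -⟩
        exact hc ⟨hxy, hnc⟩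
    rw [gab, gaM, gmb, gmM, if_neg hUe]
    ring

lemma inner_sum (hDU : D ∪ U = Finset.Icc 1 n) (hdisj : Disjoint D U)
    (h1D : 1 ∈ D) (hnD : n ∈ D) (hn : 2 ≤ n) {E : Finset ℕ}
    (hE : E ⊆ ({1, n} : Finset ℕ)) :
    ∑ S ∈ U.powerset, (-1 : ℝ) ^ S.card * Fp n D U ((D \ E) ∪ S)
      = IVAL n D U (if 1 ∈ E then 1 else 0) (if n ∈ E then n else n + 1) := by
  have expand : ∀ S ∈ U.powerset, (-1 : ℝ) ^ S.card * Fp n D U ((D \ E) ∪ S)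
      = (-1 : ℝ) ^ S.card * znAs n
        + ∑ p ∈ Finset.range (n + 2) ×ˢ Finset.range (n + 2), (-1 : ℝ) ^ S.card *
            (if AssocDiag n D U ((D \ E) ∪ S) p.1 p.2
             then zeta n D U p - znAs n else 0) := by
    intro S hS
    rw [Fp, AJf, Finset.sum_filter, mul_add, Finset.mul_sum]
  rw [Finset.sum_congr rfl expand, Finset.sum_add_distrib, Finset.sum_comm]
  have hz : ∑ S ∈ U.powerset, (-1 : ℝ) ^ S.card * znAs n
      = (if U = ∅ then znAs n else 0) := by
    rw [← Finset.sum_mul, sum_pow_card_powerset]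
    split_ifs <;> ring
  rw [hz, Finset.sum_congr rfl (fun p hp => inner_S hDU hdisj h1D hnD hn hE p hp),
    sum_gfun hDU hdisj h1D hnD hn (by split_ifs <;> omega) (by split_ifs <;> omega),
    IVAL]
  ring

end Chunk7
section Chunk8

variable {n : ℕ} {D U : Finset ℕ}

lemma not_zero_mem_U (hDU : D ∪ U = Finset.Icc 1 n) : (0 : ℕ) ∉ U := by
  intro h
  have := Finset.mem_Icc.1 (U_subset hDU h); omega

lemma not_np1_mem_U (hDU : D ∪ U = Finset.Icc 1 n) : (n + 1) ∉ U := by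
  intro h
  have := Finset.mem_Icc.1 (U_subset hDU h); omega

lemma not_one_mem_U (hdisj : Disjoint D U) (h1D : 1 ∈ D) : (1 : ℕ) ∉ U :=
  fun h => Finset.disjoint_left.1 hdisj h1D h

lemma not_n_mem_U (hdisj : Disjoint D U) (hnD : n ∈ D) : n ∉ U :=
  fun h => Finset.disjoint_left.1 hdisj hnD h

lemma D_card_split (h1D : 1 ∈ D) (hnD : n ∈ D) (hn : 2 ≤ n) :
    D.card = (D \ ({1, n} : Finset ℕ)).card + 2 := by
  have hD : D = insert 1 (insert n (D \ ({1, n} : Finset ℕ))) := by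
    ext d
    simp only [Finset.mem_insert, Finset.mem_sdiff, Finset.mem_singleton]
    constructor
    · intro hd
      by_cases h1 : d = 1
      · exact Or.inl h1
      · by_cases h2 : d = n
        · exact Or.inr (Or.inl h2)
        · exact Or.inr (Or.inr ⟨hd, by push_neg; exact ⟨h1, h2⟩⟩)
    · rintro (h | h | h)
      · exact h ▸ h1D
      · exact h ▸ hnD
      · exact h.1
  rw [Finset.card_sdiff_of_subset (by intro d hd; simp at hd; rcases hd with h | h; exacts [h ▸ h1D, h ▸ hnD])]
  have : ({1, n} : Finset ℕ).card = 2 := by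
    rw [Finset.card_insert_of_notMem (by simp; omega), Finset.card_singleton]
  rw [this]
  have hsub : ({1, n} : Finset ℕ) ⊆ D := by
    intro d hd; simp at hd; rcases hd with h | h; exacts [h ▸ h1D, h ▸ hnD]
  have := Finset.card_le_card hsub
  rw [Finset.card_insert_of_notMem (by simp; omega), Finset.card_singleton] at this
  omega

lemma filter_0n (hDU : D ∪ U = Finset.Icc 1 n) (h1D : 1 ∈ D) (hn : 2 ≤ n) :
    D.filter (fun d => 0 < d ∧ d < n) = insert 1 (D \ ({1, n} : Finset ℕ)) := by
  ext d
  simp only [Finset.mem_filter, Finset.mem_insert, Finset.mem_sdiff, Finset.mem_singleton]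
  constructor
  · rintro ⟨hd, h0, hln⟩
    by_cases h1 : d = 1
    · exact Or.inl h1
    · exact Or.inr ⟨hd, by push_neg; exact ⟨h1, by omega⟩⟩
  · rintro (h | ⟨hd, hne⟩)
    · exact ⟨h ▸ h1D, by omega⟩
    · push_neg at hne
      have := Finset.mem_Icc.1 (D_subset hDU hd)
      refine ⟨hd, by omega, by omega⟩

lemma filter_1np1 (hDU : D ∪ U = Finset.Icc 1 n) (hnD : n ∈ D) (hn : 2 ≤ n) :
    D.filter (fun d => 1 < d ∧ d < n + 1) = insert n (D \ ({1, n} : Finset ℕ)) := by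
  ext d
  simp only [Finset.mem_filter, Finset.mem_insert, Finset.mem_sdiff, Finset.mem_singleton]
  constructor
  · rintro ⟨hd, h0, hln⟩
    by_cases h1 : d = n
    · exact Or.inl h1
    · exact Or.inr ⟨hd, by push_neg; exact ⟨by omega, h1⟩⟩
  · rintro (h | ⟨hd, hne⟩)
    · exact ⟨h ▸ hnD, by omega⟩
    · push_neg at hne
      have := Finset.mem_Icc.1 (D_subset hDU hd)
      refine ⟨hd, by omega, by omega⟩

lemma filter_1n (hDU : D ∪ U = Finset.Icc 1 n) (hn : 2 ≤ n) :
    D.filter (fun d => 1 < d ∧ d < n) = D \ ({1, n} : Finset ℕ) := by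
  ext d
  simp only [Finset.mem_filter, Finset.mem_sdiff, Finset.mem_insert, Finset.mem_singleton]
  constructor
  · rintro ⟨hd, h0, hln⟩
    exact ⟨hd, by push_neg; omega⟩
  · rintro ⟨hd, hne⟩
    push_neg at hne
    have := Finset.mem_Icc.1 (D_subset hDU hd)
    exact ⟨hd, by omega, by omega⟩

lemma card_insert_sdiff_1 (h1D : 1 ∈ D) :
    (insert 1 (D \ ({1, n} : Finset ℕ))).card = (D \ ({1, n} : Finset ℕ)).card + 1 := by
  rw [Finset.card_insert_of_notMem]
  intro h
  rw [Finset.mem_sdiff] at h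
  exact h.2 (Finset.mem_insert_self 1 _)

lemma card_insert_sdiff_n (hnD : n ∈ D) :
    (insert n (D \ ({1, n} : Finset ℕ))).card = (D \ ({1, n} : Finset ℕ)).card + 1 := by
  rw [Finset.card_insert_of_notMem]
  intro h
  rw [Finset.mem_sdiff] at h
  exact h.2 (Finset.mem_insert_of_mem (Finset.mem_singleton_self n))

lemma zeta_0np1 (hDU : D ∪ U = Finset.Icc 1 n) (hdisj : Disjoint D U)
    (h1D : 1 ∈ D) (hnD : n ∈ D) (hn : 2 ≤ n) :
    zeta n D U (0, n + 1)
      = ((D.card : ℝ)) * ((D.card : ℝ) + 1) / 2 := by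
  by_cases hUe : U = ∅
  · have hD : D = Finset.Icc 1 n := by
      rw [← hDU, hUe, Finset.union_empty]
    have hcard : D.card = n := by rw [hD, Nat.card_Icc]; omega
    rw [zeta, if_neg, znAs, hcard]
    rintro ⟨-, -, hb⟩
    exact hb (Or.inr (Or.inr ⟨hUe, rfl, rfl⟩))
  · rw [zeta, if_pos]
    · simp only [wAs]
      have hR : Rdiag n D U ((0, n + 1) : ℕ × ℕ).1 ((0, n + 1) : ℕ × ℕ).2 = D := by
        show Rdiag n D U 0 (n + 1) = D
        rw [Rdiag, if_neg (not_zero_mem_U hDU), if_neg (not_np1_mem_U hDU)]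
        refine Finset.filter_true_of_mem ?_
        intro d hd
        have := Finset.mem_Icc.1 (D_subset hDU hd); omega
      rw [hR]
    · refine ⟨by omega, by omega, ?_⟩
      rintro (hc | ⟨-, hc | hc | hc⟩ | ⟨hUe', -, -⟩)
      · exact hc.2.2.2 1 (Finset.mem_insert_of_mem (Finset.mem_insert_of_mem h1D))
          ⟨by omega, by omega⟩
      · exact not_np1_mem_U hDU hc.2.1
      · exact not_zero_mem_U hDU hc.2.1
      · exact not_zero_mem_U hDU hc.1
      · exact hUe hUe'

lemma zeta_0n (hDU : D ∪ U = Finset.Icc 1 n) (hdisj : Disjoint D U)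
    (h1D : 1 ∈ D) (hnD : n ∈ D) (hn : 2 ≤ n) :
    zeta n D U (0, n)
      = (((D \ ({1, n} : Finset ℕ)).card : ℝ) + 1)
        * (((D \ ({1, n} : Finset ℕ)).card : ℝ) + 2) / 2 := by
  rw [zeta, if_pos]
  · simp only [wAs]
    have hR : Rdiag n D U ((0, n) : ℕ × ℕ).1 ((0, n) : ℕ × ℕ).2
        = insert 1 (D \ ({1, n} : Finset ℕ)) := by
      show Rdiag n D U 0 n = _
      rw [Rdiag, if_neg (not_zero_mem_U hDU), if_neg (not_n_mem_U hdisj hnD)]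
      exact filter_0n hDU h1D hn
    rw [hR, card_insert_sdiff_1 h1D]
    push_cast
    ring
  · refine ⟨by omega, by omega, ?_⟩
    rintro (hc | ⟨-, hc | hc | hc⟩ | ⟨-, -, hc⟩)
    · exact hc.2.2.2 1 (Finset.mem_insert_of_mem (Finset.mem_insert_of_mem h1D))
        ⟨by omega, by omega⟩
    · exact not_n_mem_U hdisj hnD hc.2.1
    · have h' : n = n + 1 := hc.1
      omega
    · exact not_zero_mem_U hDU hc.1
    · have h' : n = n + 1 := hc
      omega

lemma zeta_1np1 (hDU : D ∪ U = Finset.Icc 1 n) (hdisj : Disjoint D U)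
    (h1D : 1 ∈ D) (hnD : n ∈ D) (hn : 2 ≤ n) :
    zeta n D U (1, n + 1)
      = (((D \ ({1, n} : Finset ℕ)).card : ℝ) + 1)
        * (((D \ ({1, n} : Finset ℕ)).card : ℝ) + 2) / 2 := by
  rw [zeta, if_pos]
  · simp only [wAs]
    have hR : Rdiag n D U ((1, n + 1) : ℕ × ℕ).1 ((1, n + 1) : ℕ × ℕ).2
        = insert n (D \ ({1, n} : Finset ℕ)) := by
      show Rdiag n D U 1 (n + 1) = _
      rw [Rdiag, if_neg (not_one_mem_U hdisj h1D), if_neg (not_np1_mem_U hDU)]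
      exact filter_1np1 hDU hnD hn
    rw [hR, card_insert_sdiff_n hnD]
    push_cast
    ring
  · refine ⟨by omega, by omega, ?_⟩
    rintro (hc | ⟨-, hc | hc | hc⟩ | ⟨-, hc, -⟩)
    · exact hc.2.2.2 n (Finset.mem_insert_of_mem (Finset.mem_insert_of_mem hnD))
        ⟨by omega, by omega⟩
    · have h' : (1 : ℕ) = 0 := hc.1
      omega
    · exact not_one_mem_U hdisj h1D hc.2.1
    · exact not_one_mem_U hdisj h1D hc.1
    · have h' : (1 : ℕ) = 0 := hc
      omega

lemma zeta_1n (hDU : D ∪ U = Finset.Icc 1 n) (hdisj : Disjoint D U)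
    (h1D : 1 ∈ D) (hnD : n ∈ D) (hn : 2 ≤ n)
    (hne : (D \ ({1, n} : Finset ℕ)).Nonempty) :
    zeta n D U (1, n)
      = (((D \ ({1, n} : Finset ℕ)).card : ℝ))
        * (((D \ ({1, n} : Finset ℕ)).card : ℝ) + 1) / 2 := by
  obtain ⟨d0, hd0⟩ := hne
  have hd0D := (Finset.mem_sdiff.1 hd0).1
  have hd0n : 1 < d0 ∧ d0 < n := by
    have h1 := (Finset.mem_sdiff.1 hd0).2
    rw [Finset.mem_insert, Finset.mem_singleton] at h1
    push_neg at h1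
    have := Finset.mem_Icc.1 (D_subset hDU hd0D)
    omega
  rw [zeta, if_pos]
  · simp only [wAs]
    have hR : Rdiag n D U ((1, n) : ℕ × ℕ).1 ((1, n) : ℕ × ℕ).2
        = D \ ({1, n} : Finset ℕ) := by
      show Rdiag n D U 1 n = _
      rw [Rdiag, if_neg (not_one_mem_U hdisj h1D), if_neg (not_n_mem_U hdisj hnD)]
      exact filter_1n hDU hn
    rw [hR]
  · refine ⟨by omega, by omega, ?_⟩
    rintro (hc | ⟨-, hc | hc | hc⟩ | ⟨-, hc, -⟩)
    · exact hc.2.2.2 d0 (Finset.mem_insert_of_mem (Finset.mem_insert_of_mem hd0D))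
        ⟨by omega, by omega⟩
    · exact not_n_mem_U hdisj hnD hc.2.1
    · have h' : n = n + 1 := hc.1
      omega
    · exact not_one_mem_U hdisj h1D hc.1
    · have h' : (1 : ℕ) = 0 := hc
      omega

lemma Fp_nil (h1D : 1 ∈ D) (hnD : n ∈ D) (hn : 2 ≤ n) :
    Fp n D U ∅ = znAs n := by
  rw [Fp, AJf_nil h1D hnD (by omega), Finset.sum_empty, add_zero]

end Chunk8
section Chunk9

variable {n : ℕ} {D U : Finset ℕ}

lemma perE_eval (hDU : D ∪ U = Finset.Icc 1 n) (hdisj : Disjoint D U)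
    (h1D : 1 ∈ D) (hnD : n ∈ D) (hn : 2 ≤ n) {E : Finset ℕ}
    (hE : E ⊆ ({1, n} : Finset ℕ)) :
    (∑ K ∈ ((Finset.Icc 1 n).powerset.filter
        (fun K => IsNested n D K ∧ Finset.Icc 1 n ⊆ K ∪ Bfull n D U K)).filter
        (fun K => ({1, n} : Finset ℕ) \ K = E),
      (-1 : ℝ) ^ n * (-1) ^ K.card * Fp n D U K)
    = (-1 : ℝ) ^ n * ((-1) ^ ((D \ E).card) *
        IVAL n D U (if 1 ∈ E then 1 else 0) (if n ∈ E then n else n + 1))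
      - (if D \ E = ∅ then (-1 : ℝ) ^ n * znAs n else 0) := by
  rw [G_fiber hDU hdisj h1D hnD hn hE]
  by_cases hDE : D \ E = ∅
  · rw [if_pos hDE]
    have himg : (U.powerset.image fun S => (D \ E) ∪ S) = U.powerset := by
      rw [hDE]
      simp only [Finset.empty_union, Finset.image_id']
    rw [himg, Finset.sum_erase_eq_sub (Finset.empty_mem_powerset U)]
    have hterm : ∀ S ∈ U.powerset,
        (-1 : ℝ) ^ n * (-1) ^ S.card * Fp n D U S
          = (-1 : ℝ) ^ n * ((-1) ^ S.card * Fp n D U ((D \ E) ∪ S)) := by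
      intro S hS
      rw [hDE, Finset.empty_union, mul_assoc]
    rw [Finset.sum_congr rfl hterm, ← Finset.mul_sum,
      inner_sum hDU hdisj h1D hnD hn hE, Finset.card_empty, pow_zero,
      Fp_nil h1D hnD hn, hDE, Finset.card_empty, pow_zero]
    ring
  · rw [if_neg hDE, sub_zero]
    have hnotmem : (∅ : Finset ℕ) ∉ U.powerset.image fun S => (D \ E) ∪ S := by
      intro h
      obtain ⟨S, hS, hphi⟩ := Finset.mem_image.1 h
      exact hDE (Finset.union_eq_empty.1 hphi).1
    rw [Finset.erase_eq_of_notMem hnotmem]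
    have hinj : ∀ S ∈ U.powerset, ∀ S' ∈ U.powerset,
        (D \ E) ∪ S = (D \ E) ∪ S' → S = S' := by
      intro S hS S' hS' heq
      rw [Finset.mem_powerset] at hS hS'
      have h1 := KES_inter_U (E := E) hdisj hS
      have h2 := KES_inter_U (E := E) hdisj hS'
      rw [← h1, ← h2, heq]
    rw [Finset.sum_image hinj]
    have hterm : ∀ S ∈ U.powerset,
        (-1 : ℝ) ^ n * (-1) ^ ((D \ E) ∪ S).card * Fp n D U ((D \ E) ∪ S)
          = ((-1 : ℝ) ^ n * (-1) ^ ((D \ E).card))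
            * ((-1) ^ S.card * Fp n D U ((D \ E) ∪ S)) := by
      intro S hS
      rw [Finset.mem_powerset] at hS
      have hd : Disjoint (D \ E) S := by
        refine Finset.disjoint_left.2 fun x hx hxS => ?_
        exact Finset.disjoint_left.1 hdisj (Finset.mem_sdiff.1 hx).1 (hS hxS)
      rw [Finset.card_union_of_disjoint hd, pow_add]
      ring
    rw [Finset.sum_congr rfl hterm, ← Finset.mul_sum,
      inner_sum hDU hdisj h1D hnD hn hE]
    ring

end Chunk9

/-- for the associahedron right-hand sides, `y_{[n]} = (−1)^{|U|}`. -/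
theorem statement3 (n : ℕ) (D U : Finset ℕ) (hn : 2 ≤ n)
    (hDU : D ∪ U = Finset.Icc 1 n) (hdisj : Disjoint D U) (h1D : 1 ∈ D) (hnD : n ∈ D) :
    yI n D U (wAs n D U) (znAs n) (Finset.Icc 1 n) = (-1 : ℝ) ^ U.card := by
  have h1n : (1 : ℕ) ≠ n := by omega
  have hkc : D.card = (D \ ({1, n} : Finset ℕ)).card + 2 := D_card_split h1D hnD hn
  have hDn_eq : D \ ({n} : Finset ℕ) = insert 1 (D \ ({1, n} : Finset ℕ)) := by
    ext d
    simp only [Finset.mem_sdiff, Finset.mem_singleton, Finset.mem_insert]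
    constructor
    · rintro ⟨hd, hdn⟩
      by_cases h1 : d = 1
      · exact Or.inl h1
      · exact Or.inr ⟨hd, by push_neg; exact ⟨h1, hdn⟩⟩
    · rintro (h | ⟨hd, hne⟩)
      · exact ⟨h ▸ h1D, by omega⟩
      · push_neg at hne
        exact ⟨hd, hne.2⟩
  have hD1_eq : D \ ({1} : Finset ℕ) = insert n (D \ ({1, n} : Finset ℕ)) := by
    ext d
    simp only [Finset.mem_sdiff, Finset.mem_singleton, Finset.mem_insert]
    constructor
    · rintro ⟨hd, hdn⟩
      by_cases h1 : d = n
      · exact Or.inl h1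
      · exact Or.inr ⟨hd, by push_neg; exact ⟨hdn, h1⟩⟩
    · rintro (h | ⟨hd, hne⟩)
      · exact ⟨h ▸ hnD, by omega⟩
      · push_neg at hne
        exact ⟨hd, hne.1⟩
  have hDncard : (D \ ({n} : Finset ℕ)).card = (D \ ({1, n} : Finset ℕ)).card + 1 := by
    rw [hDn_eq, card_insert_sdiff_1 h1D]
  have hD1card : (D \ ({1} : Finset ℕ)).card = (D \ ({1, n} : Finset ℕ)).card + 1 := by
    rw [hD1_eq, card_insert_sdiff_n hnD]
  have hDne : ¬ (D \ (∅ : Finset ℕ) = ∅) := by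
    rw [Finset.sdiff_empty]
    intro h
    rw [h] at h1D
    exact Finset.notMem_empty _ h1D
  have hDnne : ¬ (D \ ({n} : Finset ℕ) = ∅) := by
    rw [hDn_eq]
    exact Finset.insert_ne_empty _ _
  have hD1ne : ¬ (D \ ({1} : Finset ℕ) = ∅) := by
    rw [hD1_eq]
    exact Finset.insert_ne_empty _ _
  have hUcard : D.card + U.card = n := by
    rw [← Finset.card_union_of_disjoint hdisj, hDU, Nat.card_Icc]
    omega
  have hmaps : ∀ K ∈ (Finset.Icc 1 n).powerset.filter
      (fun K => IsNested n D K ∧ Finset.Icc 1 n ⊆ K ∪ Bfull n D U K),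
      ({1, n} : Finset ℕ) \ K ∈ ({1, n} : Finset ℕ).powerset :=
    fun K _ => Finset.mem_powerset.2 Finset.sdiff_subset
  rw [yI_eq_G hDU, ← Finset.sum_filter,
    ← Finset.sum_fiberwise_of_maps_to hmaps
      (fun K => (-1 : ℝ) ^ n * (-1) ^ K.card * Fp n D U K)]
  rw [Finset.sum_congr rfl (fun E hEp => perE_eval hDU hdisj h1D hnD hn
    (Finset.mem_powerset.1 hEp))]
  have hsing : ({n} : Finset ℕ).powerset = {∅, {n}} := by
    ext t
    rw [Finset.mem_powerset, Finset.subset_singleton_iff, Finset.mem_insert,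
      Finset.mem_singleton]
  have hpairne : (∅ : Finset ℕ) ≠ {n} := by
    intro h
    have := Finset.mem_singleton_self n
    rw [← h] at this
    exact Finset.notMem_empty _ this
  rw [show ({1, n} : Finset ℕ) = insert 1 {n} from rfl,
    Finset.sum_powerset_insert (by simp [h1n]), hsing,
    Finset.sum_pair hpairne, Finset.sum_pair hpairne, insert_empty_eq]
  -- reduce membership if-s
  rw [if_neg (Finset.notMem_empty 1), if_neg (Finset.notMem_empty n),
    if_neg (by rw [Finset.mem_singleton]; omega : ¬ (1 : ℕ) ∈ ({n} : Finset ℕ)),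
    if_pos (Finset.mem_singleton_self n),
    if_pos (Finset.mem_singleton_self 1),
    if_neg (by rw [Finset.mem_singleton]; omega : ¬ n ∈ ({1} : Finset ℕ)),
    if_pos (Finset.mem_insert_self 1 {n}),
    if_pos (Finset.mem_insert_of_mem (Finset.mem_singleton_self n) :
      n ∈ ({1, n} : Finset ℕ)),
    if_neg hDne, if_neg hDnne, if_neg hD1ne,
    Finset.sdiff_empty, hkc, hDncard, hD1card]
  have hp2 : (-1 : ℝ) ^ ((D \ ({1, n} : Finset ℕ)).card + 2)
      = (-1) ^ ((D \ ({1, n} : Finset ℕ)).card) := by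
    rw [pow_add, neg_one_sq, mul_one]
  have hp1 : (-1 : ℝ) ^ ((D \ ({1, n} : Finset ℕ)).card + 1)
      = -((-1) ^ ((D \ ({1, n} : Finset ℕ)).card)) := by
    rw [pow_succ, mul_neg_one]
  have hsign : (-1 : ℝ) ^ n * (-1) ^ ((D \ ({1, n} : Finset ℕ)).card)
      = (-1) ^ U.card := by
    obtain ⟨c, hc⟩ : ∃ c, (D \ ({1, n} : Finset ℕ)).card = c := ⟨_, rfl⟩
    rw [hc]
    have hn' : n = c + 2 + U.card := by omega
    have hr2 : (-1 : ℝ) ^ c * (-1) ^ c = 1 := by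
      rw [← pow_add]
      exact Even.neg_one_pow ⟨_, rfl⟩
    rw [hn', pow_add, pow_add, neg_one_sq, mul_one]
    linear_combination ((-1 : ℝ) ^ U.card) * hr2
  simp only [IVAL]
  rw [zeta_0np1 hDU hdisj h1D hnD hn, zeta_0n hDU hdisj h1D hnD hn,
    zeta_1np1 hDU hdisj h1D hnD hn, hp2, hp1, hkc]
  by_cases hc2e : D \ ({1, n} : Finset ℕ) = ∅
  · rw [if_pos hc2e, zeta_one_n_boundary h1D hnD hn hc2e]
    have hc20 : (D \ ({1, n} : Finset ℕ)).card = 0 := by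
      rw [hc2e, Finset.card_empty]
    rw [hc20] at hsign ⊢
    by_cases hUe : U = ∅
    · simp only [if_pos hUe]
      push_cast
      linear_combination hsign
    · simp only [if_neg hUe]
      push_cast
      linear_combination hsign
  · rw [if_neg hc2e, zeta_1n hDU hdisj h1D hnD hn
      (Finset.nonempty_iff_ne_empty.2 hc2e)]
    by_cases hUe : U = ∅
    · simp only [if_pos hUe]
      push_cast
      linear_combination hsign
    · simp only [if_neg hUe]
      push_cast
      linear_combination hsign

end AssocPaper
end

section
/- Let I ⊆ [n] be nonempty, nested and of type (1,0), i.e. I ∩ U = ∅ and I = {d ∈ D : a < d < b} with a = a(I), b = b(I), and let δ = {a,b}. Then: (a) δ is a proper diagonal if and only if I ≠ [n]; (b) if δ is not proper then δ = {0, n+1} and U = ∅; (c) R_δ = I, where in the non-proper case one uses the convention R_{{0,n+1}} = [n] when U = ∅. -/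
open Finset

attribute [local instance] Classical.propDecidable

namespace AssocPaper

/-- for nonempty nested `I` of type `(1,0)`, i.e. `I ∩ U = ∅` and
`I = {d ∈ D : a < d < b}`, and `δ = {a,b}`: (a) `δ` is proper iff `I ≠ [n]`;
(b) if `δ` is not proper then `δ = {0,n+1}` and `U = ∅`; (c) `R_δ = I` (with the
convention `R_{{0,n+1}} = [n]` when `U = ∅` in the non-proper case). -/
theorem statement5 (n : ℕ) (D U : Finset ℕ) (hn : 2 ≤ n)
    (hDU : D ∪ U = Finset.Icc 1 n) (hdisj : Disjoint D U) (h1D : 1 ∈ D) (hnD : n ∈ D)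
    (I : Finset ℕ) (hne : I.Nonempty) (hsub : I ⊆ Finset.Icc 1 n)
    (hnested : IsNested n D I) (hIU : I ∩ U = ∅)
    (hI : I = D.filter fun d => aI D I < d ∧ d < bI n D I) :
    (IsProper n D U (aI D I) (bI n D I) ↔ I ≠ Finset.Icc 1 n)
    ∧ (¬ IsProper n D U (aI D I) (bI n D I) →
        aI D I = 0 ∧ bI n D I = n + 1 ∧ U = ∅)
    ∧ Rext n D U (aI D I) (bI n D I) = I := by
  obtain ⟨i0, hi0⟩ := hne
  set a := aI D I with ha
  set b := bI n D I with hb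
  have hIicc : ∀ i ∈ I, 1 ≤ i ∧ i ≤ n := fun i hi => Finset.mem_Icc.mp (hsub hi)
  -- properties of a
  have hSne : (0:ℕ) ∈ (insert 0 D).filter (fun e => ∀ i ∈ I, e < i) := by
    exact Finset.mem_filter.mpr ⟨Finset.mem_insert_self 0 D,
      fun i hi => lt_of_lt_of_le Nat.zero_lt_one (hIicc i hi).1⟩
  have hane : ((insert 0 D).filter (fun e => ∀ i ∈ I, e < i)).Nonempty := ⟨0, hSne⟩
  have haS : a ∈ (insert 0 D).filter (fun e => ∀ i ∈ I, e < i) := by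
    have h := Finset.max'_mem _ hane
    rwa [Finset.max'_eq_sup', Finset.sup'_eq_sup] at h
  have haD : a ∈ insert 0 D := (Finset.mem_filter.mp haS).1
  have haI : ∀ i ∈ I, a < i := (Finset.mem_filter.mp haS).2
  -- properties of b
  have hTne : (n + 1) ∈ {e : ℕ | e ∈ insert (n + 1) D ∧ ∀ i ∈ I, i < e} := by
    refine ⟨Finset.mem_insert_self _ _, fun i hi => ?_⟩
    have := (hIicc i hi).2; omega
  have hbT : b ∈ {e : ℕ | e ∈ insert (n + 1) D ∧ ∀ i ∈ I, i < e} :=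
    Nat.sInf_mem ⟨n + 1, hTne⟩
  have hbD : b ∈ insert (n + 1) D := hbT.1
  have hbI : ∀ i ∈ I, i < b := hbT.2
  have hbn : b ≤ n + 1 := Nat.sInf_le hTne
  have hab : a < b := lt_trans (haI i0 hi0) (hbI i0 hi0)
  -- a, b are not in U
  have hUicc : U ⊆ Finset.Icc 1 n := fun u hu => hDU ▸ Finset.mem_union_right D hu
  have hDicc : D ⊆ Finset.Icc 1 n := fun d hd => hDU ▸ Finset.mem_union_left U hd
  have haU : a ∉ U := by
    rcases Finset.mem_insert.mp haD with h | h
    · intro hu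
      have := (Finset.mem_Icc.mp (hUicc hu)).1; omega
    · exact fun hu => (Finset.disjoint_left.mp hdisj h) hu
  have hbU : b ∉ U := by
    rcases Finset.mem_insert.mp hbD with h | h
    · intro hu
      have := (Finset.mem_Icc.mp (hUicc hu)).2; omega
    · exact fun hu => (Finset.disjoint_left.mp hdisj h) hu
  have hIsubD : I ⊆ D := by
    intro x hx
    rw [hI] at hx
    exact (Finset.mem_filter.mp hx).1
  -- boundary characterization
  have hbdry : IsBoundary n D U a b ↔ (U = ∅ ∧ a = 0 ∧ b = n + 1) := by
    constructor
    · rintro (hc | ⟨hUne, (⟨_, hyU, _⟩ | ⟨_, hxU, _⟩ | hcU)⟩ | h)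
      · exfalso
        refine hc.2.2.2 i0 ?_ ⟨haI i0 hi0, hbI i0 hi0⟩
        exact Finset.mem_insert.mpr (Or.inr (Finset.mem_insert.mpr (Or.inr (hIsubD hi0))))
      · exact absurd hyU hbU
      · exact absurd hxU haU
      · exact absurd hcU.1 haU
      · exact h
    · intro h
      exact Or.inr (Or.inr h)
  -- key equivalence
  have key : (U = ∅ ∧ a = 0 ∧ b = n + 1) ↔ I = Finset.Icc 1 n := by
    constructor
    · rintro ⟨hU, ha0, hbn1⟩
      refine Finset.Subset.antisymm hsub fun x hx => ?_
      have hxD : x ∈ D := by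
        have hx' : x ∈ D ∪ U := hDU ▸ hx
        simpa [hU] using hx'
      have hx12 := Finset.mem_Icc.mp hx
      rw [hI]
      refine Finset.mem_filter.mpr ⟨hxD, ?_, ?_⟩ <;> omega
    · intro hIe
      have hU : U = ∅ := by
        rw [Finset.eq_empty_iff_forall_notMem]
        intro u hu
        have h1 : u ∈ I := hIe ▸ hUicc hu
        have h2 : u ∈ I ∩ U := Finset.mem_inter.mpr ⟨h1, hu⟩
        rw [hIU] at h2
        exact absurd h2 (Finset.notMem_empty u)
      have h1I : (1:ℕ) ∈ I := by
        rw [hIe]; exact Finset.mem_Icc.mpr ⟨le_refl 1, by omega⟩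
      have hnI : n ∈ I := by
        rw [hIe]; exact Finset.mem_Icc.mpr ⟨by omega, le_refl n⟩
      have ha0 : a = 0 := by have := haI 1 h1I; omega
      have hbn1 : b = n + 1 := by
        rcases Finset.mem_insert.mp hbD with h | h
        · exact h
        · have h1 := (Finset.mem_Icc.mp (hDicc h)).2
          have h2 := hbI n hnI
          omega
      exact ⟨hU, ha0, hbn1⟩
  -- proper iff
  have hproper : IsProper n D U a b ↔ I ≠ Finset.Icc 1 n := by
    unfold IsProper
    rw [hbdry, key]
    constructor
    · exact fun h => h.2.2
    · exact fun h => ⟨hab, hbn, h⟩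
  refine ⟨hproper, ?_, ?_⟩
  · intro hnp
    have h := key.mp ?_
    · obtain ⟨hU, ha0, hbn1⟩ := key.mpr (not_not.mp (hproper.not.mp hnp))
      exact ⟨ha0, hbn1, hU⟩
    · exact key.mpr (not_not.mp (hproper.not.mp hnp))
  · by_cases hp : IsProper n D U a b
    · rw [Rext, if_pos hp, Rdiag, if_neg haU, if_neg hbU]
      exact hI.symm
    · obtain ⟨hU, ha0, hbn1⟩ := key.mpr (not_not.mp (hproper.not.mp hp))
      rw [Rext, if_neg hp, if_pos ⟨hU, ha0, hbn1⟩]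
      exact (key.mp ⟨hU, ha0, hbn1⟩).symm

end AssocPaper
end

section
/- Let I ⊆ [n] be nonempty and nested of type (1,w) with w ≥ 1, with a = a(I), b = b(I), up intervals [α_1,β_1]_U, …, [α_w,β_w]_U, and associated diagonals δ_1 = {a,α_1}, δ_j = {β_{j−1},α_j} for 1 < j < w+1, δ_{w+1} = {β_w,b}. Then: (a) δ_j is a proper diagonal for every 1 < j < w+1; (b) δ_1 is either a proper diagonal or the boundary edge {0, u_1} (where u_1 = min U); (c) δ_{w+1} is either a proper diagonal or the boundary edge {u_m, n+1} (where u_m = max U); (d) if moreover I ≠ [n], then the set W of indices j with δ_j proper is nonempty and, with M = max W, I = R_{δ_M} ∖ ( ⋃_{j ∈ W, j ≠ M} ( [n] ∖ R_{δ_j} ) ). -/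
open Finset

attribute [local instance] Classical.propDecidable

namespace AssocPaper

set_option maxHeartbeats 2000000 in
/-- for a nonempty nested `I` of type `(1,w)`, `w ≥ 1`, with
up intervals `[α_1,β_1]_U, …, [α_w,β_w]_U` and associated diagonals
`δ_1 = {a,α_1}`, `δ_j = {β_{j−1},α_j}` (`1 < j < w+1`), `δ_{w+1} = {β_w,b}`:
(a) `δ_j` is proper for `1 < j < w+1`; (b) `δ_1` is proper or the boundary edge
`{0,u_1}`; (c) `δ_{w+1}` is proper or the boundary edge `{u_m,n+1}`;
(d) if `I ≠ [n]`, the index set `W` of proper diagonals is nonempty and, with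
`M = max W`, `I = R_{δ_M} ∖ ⋃_{j∈W, j≠M} ([n] ∖ R_{δ_j})`. -/
theorem statement6 (n : ℕ) (D U : Finset ℕ) (hn : 2 ≤ n)
    (hDU : D ∪ U = Finset.Icc 1 n) (hdisj : Disjoint D U) (h1D : 1 ∈ D) (hnD : n ∈ D)
    (I : Finset ℕ) (hne : I.Nonempty) (hsub : I ⊆ Finset.Icc 1 n)
    (hnested : IsNested n D I)
    (w : ℕ) (hw : 1 ≤ w) (α β : ℕ → ℕ)
    (hαβ : ∀ j, 1 ≤ j → j ≤ w → α j ≤ β j)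
    (hUmem : ∀ j, 1 ≤ j → j ≤ w → α j ∈ U ∧ β j ∈ U)
    (hmono : ∀ j, 1 ≤ j → j < w → β j < α (j + 1))
    (hrun : ∀ j, 1 ≤ j → j ≤ w → ∀ u ∈ U, α j ≤ u → u ≤ β j → u ∈ I)
    (hstart : ∀ j, 1 ≤ j → j ≤ w → IsRunStart U I (α j))
    (hend : ∀ j, 1 ≤ j → j ≤ w → IsRunEnd U I (β j))
    (hcover : I ∩ U =
        (Finset.Icc 1 w).biUnion fun j => U.filter fun u => α j ≤ u ∧ u ≤ β j)
    (diag : ℕ → ℕ × ℕ)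
    (hdiag1 : diag 1 = (aI D I, α 1))
    (hdiagmid : ∀ j, 1 < j → j ≤ w → diag j = (β (j - 1), α j))
    (hdiagtop : diag (w + 1) = (β w, bI n D I)) :
    (∀ j, 1 < j → j < w + 1 → IsProper n D U (diag j).1 (diag j).2)
    ∧ (IsProper n D U (diag 1).1 (diag 1).2 ∨
        ((diag 1).1 = 0 ∧ (diag 1).2 ∈ U ∧ ∀ u ∈ U, (diag 1).2 ≤ u))
    ∧ (IsProper n D U (diag (w + 1)).1 (diag (w + 1)).2 ∨
        ((diag (w + 1)).2 = n + 1 ∧ (diag (w + 1)).1 ∈ U ∧ ∀ u ∈ U, u ≤ (diag (w + 1)).1))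
    ∧ (I ≠ Finset.Icc 1 n →
        ∀ W : Finset ℕ,
          W = (Finset.Icc 1 (w + 1)).filter
                (fun j => IsProper n D U (diag j).1 (diag j).2) →
          W.Nonempty ∧
            I = Rdiag n D U (diag (W.sup id)).1 (diag (W.sup id)).2 \
                  (W.erase (W.sup id)).biUnion
                    (fun j => Finset.Icc 1 n \ Rdiag n D U (diag j).1 (diag j).2)) := by
  classical
  have hUsub : ∀ u ∈ U, 1 ≤ u ∧ u ≤ n := by
    intro u hu
    have h : u ∈ Finset.Icc 1 n := hDU ▸ Finset.mem_union_right D hu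
    exact Finset.mem_Icc.mp h
  have hDsub : ∀ d ∈ D, 1 ≤ d ∧ d ≤ n := by
    intro d hd
    have h : d ∈ Finset.Icc 1 n := hDU ▸ Finset.mem_union_left U hd
    exact Finset.mem_Icc.mp h
  have hIsub : ∀ i ∈ I, 1 ≤ i ∧ i ≤ n := fun i hi => Finset.mem_Icc.mp (hsub hi)
  have hDU' : ∀ d ∈ D, d ∉ U := fun d hd => Finset.disjoint_left.mp hdisj hd
  -- facts about a = aI D I
  have haF : aI D I ∈ (insert 0 D).filter (fun e => ∀ i ∈ I, e < i) := by
    have h0 : (0:ℕ) ∈ (insert 0 D).filter (fun e => ∀ i ∈ I, e < i) := by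
      refine Finset.mem_filter.mpr ⟨Finset.mem_insert_self _ _, ?_⟩
      intro i hi; exact lt_of_lt_of_le Nat.zero_lt_one (hIsub i hi).1
    obtain ⟨e, he, hesup⟩ := Finset.exists_mem_eq_sup _ ⟨0, h0⟩ (id : ℕ → ℕ)
    have he2 : aI D I = e := hesup
    rw [he2]; exact he
  have haD : aI D I ∈ insert 0 D := (Finset.mem_filter.mp haF).1
  have haI' : ∀ i ∈ I, aI D I < i := (Finset.mem_filter.mp haF).2
  -- facts about b = bI n D I
  have hbS : bI n D I ∈ {e : ℕ | e ∈ insert (n + 1) D ∧ ∀ i ∈ I, i < e} := by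
    apply Nat.sInf_mem
    exact ⟨n+1, Finset.mem_insert_self _ _, fun i hi => Nat.lt_succ_of_le (hIsub i hi).2⟩
  have hbD : bI n D I ∈ insert (n+1) D := hbS.1
  have hbI' : ∀ i ∈ I, i < bI n D I := hbS.2
  have haU : aI D I ∉ U := by
    intro h
    rcases Finset.mem_insert.mp haD with h0 | hD'
    · have := (hUsub _ h).1; omega
    · exact hDU' _ hD' h
  have hbU : bI n D I ∉ U := by
    intro h
    rcases Finset.mem_insert.mp hbD with h0 | hD'
    · have := (hUsub _ h).2; omega
    · exact hDU' _ hD' h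
  have hαI : ∀ j, 1 ≤ j → j ≤ w → α j ∈ I := fun j h1 h2 => (hstart j h1 h2).1
  have hβI : ∀ j, 1 ≤ j → j ≤ w → β j ∈ I := fun j h1 h2 => (hend j h1 h2).1
  have hαU : ∀ j, 1 ≤ j → j ≤ w → α j ∈ U := fun j h1 h2 => (hUmem j h1 h2).1
  have hβU : ∀ j, 1 ≤ j → j ≤ w → β j ∈ U := fun j h1 h2 => (hUmem j h1 h2).2
  have hβmono : ∀ j k, 1 ≤ j → j ≤ k → k ≤ w → β j ≤ β k := by
    intro j k h1 hjk hkw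
    induction k, hjk using Nat.le_induction with
    | base => exact le_rfl
    | succ k hk ih =>
      have h2 := hmono k (by omega) (by omega)
      have h3 := hαβ (k+1) (by omega) (by omega)
      have h4 := ih (by omega)
      omega
  have hαmono : ∀ j k, 1 ≤ j → j ≤ k → k ≤ w → α j ≤ α k := by
    intro j k h1 hjk hkw
    induction k, hjk using Nat.le_induction with
    | base => exact le_rfl
    | succ k hk ih =>
      have h2 := hmono k (by omega) (by omega)
      have h3 := hαβ k (by omega) (by omega)
      have h4 := ih (by omega)
      omega
  have hUDbar : ∀ u ∈ U, u ∉ Dbar n D := by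
    intro u hu hmem
    have h1 := hUsub u hu
    simp only [Dbar, Finset.mem_insert] at hmem
    rcases hmem with h | h | h
    · omega
    · omega
    · exact hDU' u h hu
  have hα1U : α 1 ∈ U := hαU 1 le_rfl hw
  have hβwU : β w ∈ U := hβU w hw le_rfl
  -- part (a)
  have parta : ∀ j, 1 < j → j < w + 1 → IsProper n D U (diag j).1 (diag j).2 := by
    intro j hj1 hjw
    have hj2 : j ≤ w := by omega
    rw [hdiagmid j hj1 hj2]
    have hj1' : 1 ≤ j - 1 := by omega
    have hjw' : j - 1 ≤ w := by omega
    have hxU : β (j-1) ∈ U := hβU _ hj1' hjw'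
    have hyU : α j ∈ U := hαU _ (by omega) hj2
    have hxy : β (j-1) < α j := by
      have h := hmono (j-1) hj1' (by omega)
      have hjj : j - 1 + 1 = j := by omega
      rwa [hjj] at h
    show β (j-1) < α j ∧ α j ≤ n + 1 ∧ ¬ IsBoundary n D U (β (j-1)) (α j)
    refine ⟨hxy, by have := hUsub _ hyU; omega, ?_⟩
    intro hB
    rcases hB with hc | ⟨hUne, hcase⟩ | ⟨hUe, _⟩
    · exact hUDbar _ hxU hc.1
    · rcases hcase with ⟨h0, _⟩ | ⟨hn1, _⟩ | hcons
      · have := hUsub _ hxU; omega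
      · have := hUsub _ hyU; omega
      · exact (hend (j-1) hj1' hjw').2.2 _ hcons (hαI j (by omega) hj2)
    · rw [hUe] at hxU; exact absurd hxU (Finset.notMem_empty _)
  -- part (b)
  have partb : IsProper n D U (diag 1).1 (diag 1).2 ∨
      ((diag 1).1 = 0 ∧ (diag 1).2 ∈ U ∧ ∀ u ∈ U, (diag 1).2 ≤ u) := by
    rw [hdiag1]
    show IsProper n D U (aI D I) (α 1) ∨
      (aI D I = 0 ∧ α 1 ∈ U ∧ ∀ u ∈ U, α 1 ≤ u)
    by_cases hcase : aI D I = 0 ∧ ∀ u ∈ U, α 1 ≤ u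
    · exact Or.inr ⟨hcase.1, hα1U, hcase.2⟩
    left
    show aI D I < α 1 ∧ α 1 ≤ n + 1 ∧ ¬ IsBoundary n D U (aI D I) (α 1)
    refine ⟨haI' _ (hαI 1 le_rfl hw), by have := hUsub _ hα1U; omega, ?_⟩
    intro hB
    rcases hB with hc | ⟨hUne, hc⟩ | ⟨hUe, _⟩
    · exact hUDbar _ hα1U hc.2.1
    · rcases hc with ⟨h0, _, hmin⟩ | ⟨hn1, _⟩ | hcons
      · exact hcase ⟨h0, hmin⟩
      · have := hUsub _ hα1U; omega
      · exact haU hcons.1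
    · rw [hUe] at hα1U; exact absurd hα1U (Finset.notMem_empty _)
  -- part (c)
  have partc : IsProper n D U (diag (w+1)).1 (diag (w+1)).2 ∨
      ((diag (w+1)).2 = n+1 ∧ (diag (w+1)).1 ∈ U ∧ ∀ u ∈ U, u ≤ (diag (w+1)).1) := by
    rw [hdiagtop]
    show IsProper n D U (β w) (bI n D I) ∨
      (bI n D I = n + 1 ∧ β w ∈ U ∧ ∀ u ∈ U, u ≤ β w)
    by_cases hcase : bI n D I = n + 1 ∧ ∀ u ∈ U, u ≤ β w
    · exact Or.inr ⟨hcase.1, hβwU, hcase.2⟩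
    left
    show β w < bI n D I ∧ bI n D I ≤ n + 1 ∧ ¬ IsBoundary n D U (β w) (bI n D I)
    refine ⟨hbI' _ (hβI w hw le_rfl), ?_, ?_⟩
    · rcases Finset.mem_insert.mp hbD with h | h
      · omega
      · have := hDsub _ h; omega
    intro hB
    rcases hB with hc | ⟨hUne, hc⟩ | ⟨hUe, _⟩
    · exact hUDbar _ hβwU hc.1
    · rcases hc with ⟨h0, _⟩ | ⟨hn1, _, hmax⟩ | hcons
      · have := hUsub _ hβwU; omega
      · exact hcase ⟨hn1, hmax⟩
      · exact hbU hcons.2.1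
    · rw [hUe] at hβwU; exact absurd hβwU (Finset.notMem_empty _)
  -- membership characterizations of the R sets
  have hR1 : ∀ i, i ∈ Rdiag n D U (diag 1).1 (diag 1).2 ↔
      ((i ∈ D ∧ aI D I < i) ∨ (i ∈ U ∧ α 1 ≤ i)) := by
    intro i
    rw [hdiag1]
    show i ∈ Rdiag n D U (aI D I) (α 1) ↔ _
    simp only [Rdiag]
    rw [if_neg haU, if_pos hα1U]
    simp only [Finset.mem_union, Finset.mem_filter]
  have hRmid : ∀ j, 1 < j → j ≤ w → ∀ i, i ∈ Rdiag n D U (diag j).1 (diag j).2 ↔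
      (i ∈ D ∨ (i ∈ U ∧ (i ≤ β (j-1) ∨ α j ≤ i))) := by
    intro j hj1 hjw i
    rw [hdiagmid j hj1 hjw]
    have hxU : β (j-1) ∈ U := hβU _ (by omega) (by omega)
    have hyU : α j ∈ U := hαU _ (by omega) hjw
    show i ∈ Rdiag n D U (β (j-1)) (α j) ↔ _
    simp only [Rdiag]
    rw [if_pos hxU, if_pos hyU]
    simp only [Finset.mem_union, Finset.mem_filter]
    tauto
  have hRtop : ∀ i, i ∈ Rdiag n D U (diag (w+1)).1 (diag (w+1)).2 ↔
      ((i ∈ D ∧ i < bI n D I) ∨ (i ∈ U ∧ i ≤ β w)) := by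
    intro i
    rw [hdiagtop]
    show i ∈ Rdiag n D U (β w) (bI n D I) ↔ _
    simp only [Rdiag]
    rw [if_pos hβwU, if_neg hbU]
    simp only [Finset.mem_union, Finset.mem_filter]
  have hRsub : ∀ x y i, i ∈ Rdiag n D U x y → i ∈ Finset.Icc 1 n := by
    intro x y i hi
    rw [← hDU]
    simp only [Rdiag] at hi
    split_ifs at hi <;>
      simp only [Finset.mem_union, Finset.mem_filter] at hi ⊢ <;> tauto
  -- forward direction: I is contained in every R
  have hfwd : ∀ i ∈ I, ∀ j, 1 ≤ j → j ≤ w + 1 →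
      i ∈ Rdiag n D U (diag j).1 (diag j).2 := by
    intro i hi j hj1 hjw
    have hiDU : i ∈ D ∪ U := by rw [hDU]; exact hsub hi
    rcases Finset.mem_union.mp hiDU with hiD | hiU
    · rcases Nat.lt_or_ge 1 j with hj | hj
      · rcases Nat.lt_or_ge j (w+1) with hj' | hj'
        · exact (hRmid j hj (by omega) i).mpr (Or.inl hiD)
        · have hje : j = w + 1 := by omega
          subst hje
          exact (hRtop i).mpr (Or.inl ⟨hiD, hbI' i hi⟩)
      · have hje : j = 1 := by omega
        subst hje
        exact (hR1 i).mpr (Or.inl ⟨hiD, haI' i hi⟩)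
    · have hiIU : i ∈ I ∩ U := Finset.mem_inter.mpr ⟨hi, hiU⟩
      rw [hcover] at hiIU
      obtain ⟨k, hk, hik⟩ := Finset.mem_biUnion.mp hiIU
      rw [Finset.mem_Icc] at hk
      obtain ⟨-, hαk, hβk⟩ := Finset.mem_filter.mp hik
      rcases Nat.lt_or_ge 1 j with hj | hj
      · rcases Nat.lt_or_ge j (w+1) with hj' | hj'
        · refine (hRmid j hj (by omega) i).mpr (Or.inr ⟨hiU, ?_⟩)
          rcases le_or_gt j k with h | h
          · exact Or.inr (le_trans (hαmono j k (by omega) h hk.2) hαk)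
          · exact Or.inl (le_trans hβk (hβmono k (j-1) hk.1 (by omega) (by omega)))
        · have hje : j = w + 1 := by omega
          subst hje
          exact (hRtop i).mpr (Or.inr ⟨hiU, le_trans hβk (hβmono k w hk.1 hk.2 le_rfl)⟩)
      · have hje : j = 1 := by omega
        subst hje
        exact (hR1 i).mpr (Or.inr ⟨hiU, le_trans (hαmono 1 k le_rfl hk.1 hk.2) hαk⟩)
  refine ⟨parta, partb, partc, ?_⟩
  intro hInot W hW
  have hWmem : ∀ j, j ∈ W ↔
      (1 ≤ j ∧ j ≤ w + 1 ∧ IsProper n D U (diag j).1 (diag j).2) := by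
    intro j; rw [hW, Finset.mem_filter, Finset.mem_Icc]; tauto
  have hend1 : 1 ∉ W → (aI D I = 0 ∧ ∀ u ∈ U, α 1 ≤ u) := by
    intro h1
    have hnp : ¬ IsProper n D U (diag 1).1 (diag 1).2 := by
      intro hp; exact h1 ((hWmem 1).mpr ⟨le_rfl, by omega, hp⟩)
    rcases partb with hp | ⟨h0, _, hmin⟩
    · exact absurd hp hnp
    · rw [hdiag1] at h0 hmin; exact ⟨h0, hmin⟩
  have hendw : (w+1) ∉ W → (bI n D I = n + 1 ∧ ∀ u ∈ U, u ≤ β w) := by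
    intro h1
    have hnp : ¬ IsProper n D U (diag (w+1)).1 (diag (w+1)).2 := by
      intro hp; exact h1 ((hWmem (w+1)).mpr ⟨by omega, le_rfl, hp⟩)
    rcases partc with hp | ⟨h0, _, hmax⟩
    · exact absurd hp hnp
    · rw [hdiagtop] at h0 hmax; exact ⟨h0, hmax⟩
  have hWne : W.Nonempty := by
    by_cases h2 : 2 ≤ w
    · exact ⟨2, (hWmem 2).mpr ⟨by omega, by omega, parta 2 (by omega) (by omega)⟩⟩
    · have hw1 : w = 1 := by omega
      subst hw1
      by_cases h1 : 1 ∈ W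
      · exact ⟨1, h1⟩
      by_cases hwp : (1:ℕ) + 1 ∈ W
      · exact ⟨_, hwp⟩
      exfalso
      obtain ⟨ha0, hmin⟩ := hend1 h1
      obtain ⟨hbn, hmax⟩ := hendw hwp
      apply hInot
      apply Finset.Subset.antisymm hsub
      intro i hi
      have hi' := Finset.mem_Icc.mp hi
      rw [← hDU] at hi
      rcases Finset.mem_union.mp hi with hiD | hiU
      · exact hnested.2.2 i hiD (by omega) (by omega)
      · exact hrun 1 le_rfl le_rfl i hiU (hmin i hiU) (hmax i hiU)
  -- backward direction
  have hbwd : ∀ i, (∀ j ∈ W, i ∈ Rdiag n D U (diag j).1 (diag j).2) → i ∈ I := by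
    intro i hi
    obtain ⟨j0, hj0⟩ := hWne
    have hj0' := (hWmem j0).mp hj0
    have hiDU : i ∈ D ∪ U := by
      rw [hDU]; exact hRsub _ _ _ (hi j0 hj0)
    rcases Finset.mem_union.mp hiDU with hiD | hiU
    · have hai : aI D I < i := by
        by_cases h1 : 1 ∈ W
        · rcases (hR1 i).mp (hi 1 h1) with ⟨_, h⟩ | ⟨hU', _⟩
          · exact h
          · exact absurd hU' (hDU' i hiD)
        · have h2 := (hend1 h1).1
          have h3 := (hDsub i hiD).1
          omega
      have hbi : i < bI n D I := by
        by_cases h1 : w + 1 ∈ W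
        · rcases (hRtop i).mp (hi _ h1) with ⟨_, h⟩ | ⟨hU', _⟩
          · exact h
          · exact absurd hU' (hDU' i hiD)
        · have h2 := (hendw h1).1
          have h3 := (hDsub i hiD).2
          omega
      exact hnested.2.2 i hiD hai hbi
    · have hiD' : i ∉ D := fun h => hDU' i h hiU
      have hα1i : α 1 ≤ i := by
        by_cases h1 : 1 ∈ W
        · rcases (hR1 i).mp (hi 1 h1) with ⟨hD', _⟩ | ⟨_, h⟩
          · exact absurd hD' hiD'
          · exact h
        · exact (hend1 h1).2 i hiU
      have hβwi : i ≤ β w := by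
        by_cases h1 : w + 1 ∈ W
        · rcases (hRtop i).mp (hi _ h1) with ⟨hD', _⟩ | ⟨_, h⟩
          · exact absurd hD' hiD'
          · exact h
        · exact (hendw h1).2 i hiU
      have h1F : 1 ∈ (Finset.Icc 1 w).filter (fun j => α j ≤ i) :=
        Finset.mem_filter.mpr ⟨Finset.mem_Icc.mpr ⟨le_rfl, hw⟩, hα1i⟩
      obtain ⟨k, hkF, hksup⟩ :=
        Finset.exists_mem_eq_sup ((Finset.Icc 1 w).filter (fun j => α j ≤ i)) ⟨1, h1F⟩ id
      obtain ⟨hkIcc, hαki⟩ := Finset.mem_filter.mp hkF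
      rw [Finset.mem_Icc] at hkIcc
      by_cases hik : i ≤ β k
      · exact hrun k hkIcc.1 hkIcc.2 i hiU hαki hik
      · push_neg at hik
        have hkw : k < w := by
          by_contra h
          have hkw' : k = w := by omega
          rw [hkw'] at hik
          omega
        have hmem : k + 1 ∈ W :=
          (hWmem _).mpr ⟨by omega, by omega, parta (k+1) (by omega) (by omega)⟩
        rcases (hRmid (k+1) (by omega) (by omega) i).mp (hi _ hmem) with hD' | ⟨-, hc⟩
        · exact absurd hD' hiD'
        rcases hc with h | h
        · rw [Nat.add_sub_cancel] at h
          omega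
        · have hkF' : k + 1 ∈ (Finset.Icc 1 w).filter (fun j => α j ≤ i) :=
            Finset.mem_filter.mpr ⟨Finset.mem_Icc.mpr ⟨by omega, by omega⟩, h⟩
          have hle : (k+1 : ℕ) ≤ ((Finset.Icc 1 w).filter (fun j => α j ≤ i)).sup id :=
            Finset.le_sup (f := id) hkF'
          rw [hksup] at hle
          simp only [id] at hle
          omega
  have hMW : W.sup id ∈ W := by
    obtain ⟨m0, hm0W, hm0⟩ := Finset.exists_mem_eq_sup W hWne id
    rw [hm0]; exact hm0W
  refine ⟨hWne, ?_⟩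
  ext i
  rw [Finset.mem_sdiff]
  constructor
  · intro hiI
    have hMIcc := (hWmem (W.sup id)).mp hMW
    constructor
    · exact hfwd i hiI _ hMIcc.1 hMIcc.2.1
    · intro hmem
      obtain ⟨j, hjE, hj⟩ := Finset.mem_biUnion.mp hmem
      have hjW := Finset.mem_of_mem_erase hjE
      have hjIcc := (hWmem j).mp hjW
      exact (Finset.mem_sdiff.mp hj).2 (hfwd i hiI j hjIcc.1 hjIcc.2.1)
  · rintro ⟨hiM, hiB⟩
    apply hbwd
    intro j hjW
    by_cases hjM : j = W.sup id
    · rw [hjM]; exact hiM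
    · by_contra hnot
      apply hiB
      apply Finset.mem_biUnion.mpr
      exact ⟨j, Finset.mem_erase.mpr ⟨hjM, hjW⟩,
        Finset.mem_sdiff.mpr ⟨hRsub _ _ _ hiM, hnot⟩⟩

end AssocPaper
end
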